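/- arXiv:2201.12293 — 8 statements merged into one kernel-verified Lean document; each statement's English description precedes it below -/
import Mathlib

section
/- Suppose x₁,…,xₙ are linearly independent. For any GRW iteration (with any admissible weight sequence qᵢ^{(t)} and any learning rate η > 0) such that the empirical risk R̂(θ^{(t)}) → 0 as t → ∞, the iterates θ^{(t)} converge to the unique vector θ* ∈ ℝ^d satisfying θ* − θ^{(0)} ∈ span{x₁,…,xₙ} and ⟨θ*, xᵢ⟩ = yᵢ for all i = 1,…,n; in particular the limit depends only on θ^{(0)} and on x₁,…,xₙ, y₁,…,yₙ, and not on the weights qᵢ^{(t)}. -/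
open scoped RealInnerProductSpace
open Filter

/-- For linearly independent data, any GRW iteration with the squared
loss whose empirical risk tends to zero converges to the unique interpolator
`θ*` with `θ* - θ⁰ ∈ span{x₁,…,xₙ}` and `⟨θ*, xᵢ⟩ = yᵢ`; in particular the limit
does not depend on the weights. -/
theorem stmt_0 {d n : ℕ} (hn : 0 < n)
    (x : Fin n → EuclideanSpace ℝ (Fin d)) (hx : ∀ i, ‖x i‖ ≤ 1)
    (y : Fin n → ℝ)
    (hli : LinearIndependent ℝ x)
    (q : ℕ → Fin n → ℝ)
    (hq0 : ∀ t i, 0 ≤ q t i)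
    (hq1 : ∀ t, ∑ i, q t i = 1)
    (η : ℝ) (hη : 0 < η)
    (θ : ℕ → EuclideanSpace ℝ (Fin d))
    (hupd : ∀ t, θ (t + 1) = θ t - η • ∑ i, (q t i * (⟪θ t, x i⟫ - y i)) • x i)
    (hrisk : Tendsto (fun t => (1 / (n : ℝ)) * ∑ i, (1 / 2) * (⟪θ t, x i⟫ - y i) ^ 2)
      atTop (nhds 0)) :
    ∃ θstar : EuclideanSpace ℝ (Fin d),
      (θstar - θ 0 ∈ Submodule.span ℝ (Set.range x) ∧ ∀ i, ⟪θstar, x i⟫ = y i) ∧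
      (∀ θ' : EuclideanSpace ℝ (Fin d),
        θ' - θ 0 ∈ Submodule.span ℝ (Set.range x) → (∀ i, ⟪θ', x i⟫ = y i) → θ' = θstar) ∧
      Tendsto θ atTop (nhds θstar) := by
  classical
  set S : Submodule ℝ (EuclideanSpace ℝ (Fin d)) := Submodule.span ℝ (Set.range x) with hS
  -- the linear map sending v to the vector of inner products ⟪x i, v⟫
  set L : EuclideanSpace ℝ (Fin d) →ₗ[ℝ] (Fin n → ℝ) :=
    LinearMap.pi (fun i => (innerSL ℝ (x i)).toLinearMap) with hL
  have hLapp : ∀ v i, L v i = ⟪x i, v⟫ := fun v i => rfl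
  -- the restriction of L to S is injective
  have hinj : ∀ v ∈ S, L v = 0 → v = 0 := by
    intro v hv hLv
    have horth : v ∈ Sᗮ := by
      rw [hS, Submodule.mem_orthogonal]
      intro u hu
      induction hu using Submodule.span_induction with
      | mem u hu =>
        obtain ⟨i, rfl⟩ := hu
        have := congrFun hLv i
        simpa [hLapp] using this
      | zero => simp
      | add u w _ _ hu hw => rw [inner_add_left, hu, hw, add_zero]
      | smul a u _ hu => rw [inner_smul_left, hu, mul_zero]
    have : v ∈ S ⊓ Sᗮ := ⟨hv, horth⟩
    simpa using (Submodule.orthogonal_disjoint S).le_bot this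
  have hLr_inj : Function.Injective (L.domRestrict S) := by
    rw [← LinearMap.ker_eq_bot, LinearMap.ker_eq_bot']
    intro m hm
    ext1
    exact hinj m.1 m.2 hm
  have hfinrank : Module.finrank ℝ S = Module.finrank ℝ (Fin n → ℝ) := by
    rw [hS, finrank_span_eq_card hli]
    simp
  -- the bijection between S and ℝⁿ
  set g : S ≃ₗ[ℝ] (Fin n → ℝ) :=
    (L.domRestrict S).linearEquivOfInjective hLr_inj hfinrank with hg
  have hgapp : ∀ v : S, g v = L v.1 :=
    fun v => LinearMap.linearEquivOfInjective_apply hLr_inj hfinrank v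
  -- define θstar
  obtain ⟨s, hs⟩ := g.surjective (fun i => y i - ⟪x i, θ 0⟫)
  have hint0 : ∀ i, ⟪x i, θ 0 + s.1⟫ = y i := by
    intro i
    have := congrFun (hgapp s ▸ hs) i
    rw [hLapp] at this
    rw [inner_add_right, this]
    ring
  refine ⟨θ 0 + s.1, ⟨?_, ?_⟩, ?_, ?_⟩
  · simpa using s.2
  · intro i
    rw [real_inner_comm]
    exact hint0 i
  · intro θ' hmem hint
    have hmem' : θ' - (θ 0 + s.1) ∈ S := by
      have : θ' - (θ 0 + s.1) = (θ' - θ 0) - s.1 := by abel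
      rw [this]
      exact Submodule.sub_mem S hmem s.2
    have hz : L (θ' - (θ 0 + s.1)) = 0 := by
      funext i
      rw [hLapp, real_inner_comm, inner_sub_left, hint i, real_inner_comm, hint0 i]
      simp
    have := hinj _ hmem' hz
    have := sub_eq_zero.mp this
    exact this
  -- convergence
  · set θstar : EuclideanSpace ℝ (Fin d) := θ 0 + s.1 with hθstar
    have hθstar_int : ∀ i, ⟪x i, θstar⟫ = y i := hint0
    -- each residual tends to zero
    have hres : ∀ i, Tendsto (fun t => ⟪θ t, x i⟫ - y i) atTop (nhds 0) := by
      intro i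
      have hnne : (0:ℝ) < (n:ℝ) := by exact_mod_cast hn
      have hsum : Tendsto (fun t => ∑ j, (1 / 2) * (⟪θ t, x j⟫ - y j) ^ 2)
          atTop (nhds 0) := by
        have := hrisk.const_mul (n:ℝ)
        simp only [mul_zero] at this
        refine this.congr (fun t => ?_)
        field_simp
      have hsq : Tendsto (fun t => (⟪θ t, x i⟫ - y i) ^ 2) atTop (nhds 0) := by
        have hhalf : Tendsto (fun t => (1/2 : ℝ) * (⟪θ t, x i⟫ - y i) ^ 2)
            atTop (nhds 0) := by
          refine squeeze_zero (fun t => by positivity) (fun t => ?_) hsum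
          exact Finset.single_le_sum (f := fun j => (1/2:ℝ) * (⟪θ t, x j⟫ - y j) ^ 2)
            (fun j _ => by positivity) (Finset.mem_univ i)
        have := hhalf.const_mul (2:ℝ)
        simp only [mul_zero] at this
        refine this.congr (fun t => by ring)
      rw [tendsto_zero_iff_abs_tendsto_zero]
      have := hsq.sqrt
      simpa [Real.sqrt_sq_eq_abs, Function.comp_def] using this
    -- the iterates stay in θstar + S
    have hmem : ∀ t, θ t - θstar ∈ S := by
      have h0 : ∀ t, θ t - θ 0 ∈ S := by
        intro t
        induction t with
        | zero => simp
        | succ t ih =>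
          rw [hupd t]
          have hsumS : (∑ i, (q t i * (⟪θ t, x i⟫ - y i)) • x i) ∈ S := by
            refine Submodule.sum_mem S (fun i _ => ?_)
            exact Submodule.smul_mem S _ (Submodule.subset_span ⟨i, rfl⟩)
          have : θ t - η • ∑ i, (q t i * (⟪θ t, x i⟫ - y i)) • x i - θ 0
              = (θ t - θ 0) - η • ∑ i, (q t i * (⟪θ t, x i⟫ - y i)) • x i := by abel
          rw [this]
          exact Submodule.sub_mem S ih (Submodule.smul_mem S _ hsumS)
      intro t
      have : θ t - θstar = (θ t - θ 0) - s.1 := by rw [hθstar]; abel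
      rw [this]
      exact Submodule.sub_mem S (h0 t) s.2
    set v : ℕ → S := fun t => ⟨θ t - θstar, hmem t⟩ with hv
    have hgv : Tendsto (fun t => g (v t)) atTop (nhds 0) := by
      rw [tendsto_pi_nhds]
      intro i
      have : ∀ t, g (v t) i = ⟪θ t, x i⟫ - y i := by
        intro t
        rw [hgapp, hLapp, inner_sub_right, hθstar_int i, real_inner_comm]
      simp only [this]
      simpa using hres i
    have hvc : Tendsto v atTop (nhds 0) := by
      have hcont : Continuous (g.symm : (Fin n → ℝ) →ₗ[ℝ] S) :=
        LinearMap.continuous_of_finiteDimensional _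
      have h := (hcont.tendsto 0).comp hgv
      have h2 : Tendsto v atTop (nhds (g.symm 0)) := by
        refine h.congr (fun t => ?_)
        simp [Function.comp]
      simpa using h2
    have : Tendsto (fun t => θstar + (v t : EuclideanSpace ℝ (Fin d))) atTop
        (nhds (θstar + 0)) := by
      exact tendsto_const_nhds.add ((continuous_subtype_val.tendsto 0).comp hvc)
    rw [add_zero] at this
    exact this.congr (fun t => by simp [hv])
end

section
/- Suppose x₁,…,xₙ are linearly independent and the weights of the GRW iteration satisfy Assumption 1. Then there exists η₀ > 0 such that for every learning rate 0 < η ≤ η₀ and every initialization θ^{(0)}, the empirical risk of the GRW iteration satisfies R̂(θ^{(t)}) → 0 as t → ∞. -/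
open scoped RealInnerProductSpace
open Filter

lemma my_exists_interp {d n : ℕ} (x : Fin n → EuclideanSpace ℝ (Fin d))
    (hli : LinearIndependent ℝ x) (y : Fin n → ℝ) :
    ∃ θ : EuclideanSpace ℝ (Fin d), ∀ i, ⟪θ, x i⟫ = y i := by
  let L : EuclideanSpace ℝ (Fin d) →ₗ[ℝ] EuclideanSpace ℝ (Fin n) :=
    { toFun := fun v => WithLp.toLp 2 (fun i => ⟪v, x i⟫)
      map_add' := by intro a b; ext i; simp [inner_add_left]
      map_smul' := by intro c a; ext i; simp [inner_smul_left] }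
  have hsurj : Function.Surjective L := by
    rw [← LinearMap.range_eq_top, ← Submodule.orthogonal_eq_bot_iff,
      Submodule.eq_bot_iff]
    intro c hc
    rw [Submodule.mem_orthogonal] at hc
    set v : EuclideanSpace ℝ (Fin d) := ∑ i, c i • x i with hv
    have h1 : ⟪L v, c⟫ = 0 := hc (L v) (LinearMap.mem_range_self _ _)
    have h2 : ⟪L v, c⟫ = ⟪v, v⟫ := by
      rw [PiLp.inner_apply]
      have : ∀ i, ⟪(L v) i, c i⟫ = c i * ⟪v, x i⟫ := by
        intro i
        simp [L, RCLike.inner_apply, mul_comm]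
      rw [Finset.sum_congr rfl fun i _ => this i]
      rw [hv, inner_sum]
      simp [inner_smul_right]
    have hv0 : v = 0 := by
      rw [h2, inner_self_eq_zero] at h1; exact h1
    have := linearIndependent_iff'.mp hli Finset.univ c (by simpa [hv] using hv0)
    ext i
    exact this i (Finset.mem_univ i)
  obtain ⟨θ, hθ⟩ := hsurj (WithLp.toLp 2 (fun i => y i))
  exact ⟨θ, fun i => congrArg (fun z : EuclideanSpace ℝ (Fin n) => z i) hθ⟩

/-- For linearly independent data and GRW weights satisfying
Assumption 1 (weights converge to limits with positive minimum), there is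
`η₀ > 0` such that for every learning rate `0 < η ≤ η₀` and every
initialization, the empirical risk of the GRW iteration tends to `0`. -/
theorem stmt_2 {d n : ℕ} (hn : 0 < n)
    (x : Fin n → EuclideanSpace ℝ (Fin d)) (hx : ∀ i, ‖x i‖ ≤ 1)
    (y : Fin n → ℝ)
    (hli : LinearIndependent ℝ x)
    (q : ℕ → Fin n → ℝ)
    (hq0 : ∀ t i, 0 ≤ q t i)
    (hq1 : ∀ t, ∑ i, q t i = 1)
    (qlim : Fin n → ℝ)
    (hqlim : ∀ i, Tendsto (fun t => q t i) atTop (nhds (qlim i)))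
    (hqpos : ∀ i, 0 < qlim i) :
    ∃ η₀ > (0 : ℝ), ∀ η : ℝ, 0 < η → η ≤ η₀ →
      ∀ θ : ℕ → EuclideanSpace ℝ (Fin d),
        (∀ t, θ (t + 1) = θ t - η • ∑ i, (q t i * (⟪θ t, x i⟫ - y i)) • x i) →
        Tendsto (fun t => (1 / (n : ℝ)) * ∑ i, (1 / 2) * (⟪θ t, x i⟫ - y i) ^ 2)
          atTop (nhds 0) := by
  obtain ⟨θs, hθs⟩ := my_exists_interp x hli y
  refine ⟨1, one_pos, ?_⟩
  intro η hη hη1 θ hθ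
  set r : ℕ → Fin n → ℝ := fun t i => ⟪θ t, x i⟫ - y i with hrdef
  set S : ℕ → ℝ := fun t => ∑ i, q t i * (r t i) ^ 2 with hSdef
  have hS0 : ∀ t, 0 ≤ S t := fun t =>
    Finset.sum_nonneg fun i _ => mul_nonneg (hq0 t i) (sq_nonneg _)
  set e : ℕ → EuclideanSpace ℝ (Fin d) := fun t => θ t - θs with hedef
  have her : ∀ t i, ⟪e t, x i⟫ = r t i := by
    intro t i
    simp [hedef, hrdef, inner_sub_left, hθs i]
  set w : ℕ → EuclideanSpace ℝ (Fin d) := fun t => ∑ i, (q t i * r t i) • x i with hwdef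
  have hw : ∀ t, e (t + 1) = e t - η • w t := by
    intro t
    simp only [hedef, hwdef, hrdef, hθ t]
    rw [sub_right_comm]
  have hinner : ∀ t, ⟪e t, w t⟫ = S t := by
    intro t
    rw [hwdef, hSdef]
    simp only
    rw [inner_sum]
    refine Finset.sum_congr rfl fun i _ => ?_
    rw [real_inner_smul_right, her]
    ring
  have hwnorm : ∀ t, ‖w t‖ ^ 2 ≤ S t := by
    intro t
    have h1 : ‖w t‖ ≤ ∑ i, q t i * |r t i| := by
      refine (norm_sum_le _ _).trans (Finset.sum_le_sum fun i _ => ?_)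
      rw [norm_smul, Real.norm_eq_abs, abs_mul, abs_of_nonneg (hq0 t i)]
      calc q t i * |r t i| * ‖x i‖ ≤ q t i * |r t i| * 1 := by
            exact mul_le_mul_of_nonneg_left (hx i)
              (mul_nonneg (hq0 t i) (abs_nonneg _))
        _ = q t i * |r t i| := mul_one _
    have h2 : (∑ i, q t i * |r t i|) ^ 2 ≤ S t := by
      have hcs := Finset.sum_mul_sq_le_sq_mul_sq Finset.univ
        (fun i => Real.sqrt (q t i)) (fun i => Real.sqrt (q t i) * |r t i|)
      have e1 : ∀ i ∈ Finset.univ,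
          Real.sqrt (q t i) * (Real.sqrt (q t i) * |r t i|) = q t i * |r t i| := by
        intro i _
        rw [← mul_assoc, Real.mul_self_sqrt (hq0 t i)]
      have e2 : ∀ i ∈ Finset.univ, Real.sqrt (q t i) ^ 2 = q t i := by
        intro i _; exact Real.sq_sqrt (hq0 t i)
      have e3 : ∀ i ∈ Finset.univ,
          (Real.sqrt (q t i) * |r t i|) ^ 2 = q t i * r t i ^ 2 := by
        intro i _
        rw [mul_pow, Real.sq_sqrt (hq0 t i), sq_abs]
      rw [Finset.sum_congr rfl e1, Finset.sum_congr rfl e2,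
        Finset.sum_congr rfl e3, hq1 t, one_mul] at hcs
      exact hcs
    calc ‖w t‖ ^ 2 ≤ (∑ i, q t i * |r t i|) ^ 2 := by
          exact pow_le_pow_left₀ (norm_nonneg _) h1 2
      _ ≤ S t := h2
  have key : ∀ t, ‖e (t + 1)‖ ^ 2 ≤ ‖e t‖ ^ 2 - η * S t := by
    intro t
    have hexp : ‖e (t + 1)‖ ^ 2
        = ‖e t‖ ^ 2 - 2 * η * S t + η ^ 2 * ‖w t‖ ^ 2 := by
      rw [hw t, norm_sub_sq_real, real_inner_smul_right, hinner t, norm_smul,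
        Real.norm_eq_abs, abs_of_pos hη, mul_pow]
      ring
    have h3 : η ^ 2 * ‖w t‖ ^ 2 ≤ η * S t := by
      calc η ^ 2 * ‖w t‖ ^ 2 ≤ η ^ 2 * S t :=
            mul_le_mul_of_nonneg_left (hwnorm t) (sq_nonneg η)
        _ ≤ η * S t := mul_le_mul_of_nonneg_right (by nlinarith) (hS0 t)
    linarith [hexp, h3]
  have hanti : Antitone fun t => ‖e t‖ ^ 2 := by
    refine antitone_nat_of_succ_le fun t => (key t).trans ?_
    nlinarith [hS0 t, hη.le]
  have hbdd : BddBelow (Set.range fun t => ‖e t‖ ^ 2) := by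
    refine ⟨0, ?_⟩
    rintro v ⟨t, rfl⟩
    positivity
  have hconv := tendsto_atTop_ciInf hanti hbdd
  have hconv' : Tendsto (fun t => ‖e (t + 1)‖ ^ 2) atTop
      (nhds (⨅ t, ‖e t‖ ^ 2)) := hconv.comp (tendsto_add_atTop_nat 1)
  have hdiff : Tendsto (fun t => ‖e t‖ ^ 2 - ‖e (t + 1)‖ ^ 2) atTop (nhds 0) := by
    simpa using hconv.sub hconv'
  have hStend : Tendsto S atTop (nhds 0) := by
    have hbound : ∀ t, S t ≤ (‖e t‖ ^ 2 - ‖e (t + 1)‖ ^ 2) / η := by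
      intro t
      rw [le_div_iff₀ hη]
      nlinarith [key t]
    have hg : Tendsto (fun t => (‖e t‖ ^ 2 - ‖e (t + 1)‖ ^ 2) / η) atTop (nhds 0) := by
      simpa using hdiff.div_const η
    exact squeeze_zero hS0 hbound hg
  have hri : ∀ i, Tendsto (fun t => (r t i) ^ 2) atTop (nhds 0) := by
    intro i
    have hql : 0 < qlim i / 2 := by linarith [hqpos i]
    have hev : ∀ᶠ t in atTop, qlim i / 2 ≤ q t i :=
      (hqlim i).eventually (eventually_ge_nhds (by linarith [hqpos i]))
    refine squeeze_zero' (g := fun t => S t / (qlim i / 2)) (Eventually.of_forall fun t => sq_nonneg _) ?_ ?_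
    · filter_upwards [hev] with t ht
      have h1 : q t i * (r t i) ^ 2 ≤ S t :=
        Finset.single_le_sum (fun j _ => mul_nonneg (hq0 t j) (sq_nonneg _))
          (Finset.mem_univ i)
      show (r t i) ^ 2 ≤ S t / (qlim i / 2)
      rw [le_div_iff₀ hql]
      calc r t i ^ 2 * (qlim i / 2) ≤ r t i ^ 2 * q t i :=
            mul_le_mul_of_nonneg_left ht (sq_nonneg _)
        _ = q t i * r t i ^ 2 := mul_comm _ _
        _ ≤ S t := h1
    · simpa using hStend.div_const (qlim i / 2)
  have hsum : Tendsto (fun t => ∑ i, (1 / 2 : ℝ) * (r t i) ^ 2) atTop (nhds 0) := by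
    have := tendsto_finset_sum Finset.univ fun i (_ : i ∈ Finset.univ) =>
      (hri i).const_mul (1 / 2 : ℝ)
    simpa using this
  have hfin := hsum.const_mul (1 / (n : ℝ))
  rw [mul_zero] at hfin
  exact hfin
end

section
/- Let q₁,…,qₙ ≥ 0 with Σᵢ qᵢ = 1 and q* := minᵢ qᵢ > 0, and suppose x₁,…,xₙ are linearly independent, so that λ_min > 0. For every η > 0 and every θ ∈ ℝ^d, the updated point θ' = θ − η Σᵢ qᵢ xᵢ (⟨θ,xᵢ⟩ − yᵢ) satisfies F(θ') ≤ (1 − 2η q* λ_min + A² η²) F(θ). Consequently, for every 0 < η ≤ q* λ_min / A², the static GRW iterates with weights qᵢ^{(t)} ≡ qᵢ satisfy F(θ^{(t+1)}) ≤ (1 − η q* λ_min) F(θ^{(t)}) for all t, and hence F(θ^{(t)}) → 0 as t → ∞. -/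
open scoped RealInnerProductSpace
open Filter Matrix

lemma rayleigh_low {n : ℕ} {G : Matrix (Fin n) (Fin n) ℝ} (hG : G.IsHermitian)
    (w : Fin n → ℝ) (lam : ℝ) (hlam : ∀ i, lam ≤ hG.eigenvalues i) :
    lam * (w ⬝ᵥ w) ≤ w ⬝ᵥ G *ᵥ w := by
  set U : Matrix (Fin n) (Fin n) ℝ := (hG.eigenvectorUnitary : Matrix (Fin n) (Fin n) ℝ) with hU
  have hUU : U * star U = 1 := (Matrix.mem_unitaryGroup_iff).mp hG.eigenvectorUnitary.2
  set u : Fin n → ℝ := w ᵥ* U with hu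
  have hstar : star U *ᵥ w = u := by
    rw [Matrix.star_eq_conjTranspose, Matrix.conjTranspose_eq_transpose_of_trivial,
      Matrix.mulVec_transpose]
  have hww : u ⬝ᵥ u = w ⬝ᵥ w := by
    calc u ⬝ᵥ u = (w ᵥ* U) ⬝ᵥ (star U *ᵥ w) := by rw [hstar]
    _ = ((w ᵥ* U) ᵥ* star U) ⬝ᵥ w := by rw [dotProduct_mulVec]
    _ = (w ᵥ* (U * star U)) ⬝ᵥ w := by rw [Matrix.vecMul_vecMul]
    _ = w ⬝ᵥ w := by rw [hUU, Matrix.vecMul_one]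
  have hquad : w ⬝ᵥ G *ᵥ w = ∑ i, hG.eigenvalues i * u i ^ 2 := by
    conv_lhs => rw [hG.spectral_theorem, Unitary.conjStarAlgAut_apply]
    rw [← Matrix.mulVec_mulVec, ← Matrix.mulVec_mulVec, hstar, dotProduct_mulVec, ← hU, ← hu]
    simp only [dotProduct, Matrix.mulVec_diagonal, Function.comp,
      RCLike.ofReal_real_eq_id, id_eq]
    exact Finset.sum_congr rfl fun i _ => by ring
  calc lam * (w ⬝ᵥ w) = ∑ i, lam * u i ^ 2 := by
        rw [← hww]; simp only [dotProduct, Finset.mul_sum]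
        exact Finset.sum_congr rfl fun i _ => by ring
    _ ≤ ∑ i, hG.eigenvalues i * u i ^ 2 :=
        Finset.sum_le_sum fun i _ => mul_le_mul_of_nonneg_right (hlam i) (sq_nonneg _)
    _ = w ⬝ᵥ G *ᵥ w := hquad.symm

/-- Descent inequality for static GRW with the squared loss.
`F(θ) = Σᵢ qᵢ(⟨θ,xᵢ⟩-yᵢ)²`, `A = Σᵢ‖xᵢ‖²`, `λ_min` the smallest eigenvalue of the
Gram matrix. One GRW step gives `F(θ') ≤ (1-2ηq*λ_min+A²η²)F(θ)`; hence for
`0 < η ≤ q*λ_min/A²` we get `F(θ^{(t+1)}) ≤ (1-ηq*λ_min)F(θ^{(t)})` and `F(θ^{(t)}) → 0`. -/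
theorem stmt_3 {d n : ℕ} (hn : 0 < n)
    (x : Fin n → EuclideanSpace ℝ (Fin d)) (y : Fin n → ℝ)
    (hli : LinearIndependent ℝ x)
    (q : Fin n → ℝ) (hq0 : ∀ i, 0 ≤ q i) (hq1 : ∑ i, q i = 1)
    (qstar : ℝ) (hqstar : qstar = ⨅ i, q i) (hqpos : 0 < qstar)
    (hG : (Matrix.of fun i j => ⟪x i, x j⟫ : Matrix (Fin n) (Fin n) ℝ).IsHermitian)
    (lammin : ℝ) (hlam : lammin = ⨅ i, hG.eigenvalues i) (hlampos : 0 < lammin)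
    (A : ℝ) (hA : A = ∑ i, ‖x i‖ ^ 2) :
    (∀ η : ℝ, 0 < η → ∀ θ : EuclideanSpace ℝ (Fin d),
      (∑ i, q i * (⟪θ - η • ∑ j, (q j * (⟪θ, x j⟫ - y j)) • x j, x i⟫ - y i) ^ 2)
        ≤ (1 - 2 * η * qstar * lammin + A ^ 2 * η ^ 2) * ∑ i, q i * (⟪θ, x i⟫ - y i) ^ 2) ∧
    (∀ η : ℝ, 0 < η → η ≤ qstar * lammin / A ^ 2 →
      ∀ θ : ℕ → EuclideanSpace ℝ (Fin d),
        (∀ t, θ (t + 1) = θ t - η • ∑ i, (q i * (⟪θ t, x i⟫ - y i)) • x i) →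
        (∀ t, (∑ i, q i * (⟪θ (t + 1), x i⟫ - y i) ^ 2)
            ≤ (1 - η * qstar * lammin) * ∑ i, q i * (⟪θ t, x i⟫ - y i) ^ 2) ∧
          Tendsto (fun t => ∑ i, q i * (⟪θ t, x i⟫ - y i) ^ 2) atTop (nhds 0)) := by
  have hq_le : ∀ i, qstar ≤ q i := fun i => hqstar ▸ ciInf_le (Finite.bddBelow_range _) i
  have hlam_le : ∀ i, lammin ≤ hG.eigenvalues i :=
    fun i => hlam ▸ ciInf_le (Finite.bddBelow_range _) i
  have hq_le1 : ∀ i, q i ≤ 1 := fun i => hq1 ▸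
    Finset.single_le_sum (fun j _ => hq0 j) (Finset.mem_univ i)
  have hA0 : 0 ≤ A := hA ▸ Finset.sum_nonneg fun i _ => sq_nonneg _
  have hlam0 : 0 ≤ lammin := hlampos.le
  -- the one-step descent inequality
  have step : ∀ η : ℝ, 0 < η → ∀ θ : EuclideanSpace ℝ (Fin d),
      (∑ i, q i * (⟪θ - η • ∑ j, (q j * (⟪θ, x j⟫ - y j)) • x j, x i⟫ - y i) ^ 2)
        ≤ (1 - 2 * η * qstar * lammin + A ^ 2 * η ^ 2) * ∑ i, q i * (⟪θ, x i⟫ - y i) ^ 2 := by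
    intro η hη θ
    set r : Fin n → ℝ := fun i => ⟪θ, x i⟫ - y i with hr
    set w : Fin n → ℝ := fun i => q i * r i with hw
    set v : EuclideanSpace ℝ (Fin d) := ∑ j, w j • x j with hv
    set s : Fin n → ℝ := fun i => ⟪v, x i⟫ with hs
    set F : ℝ := ∑ i, q i * r i ^ 2 with hF
    have hF0 : 0 ≤ F := Finset.sum_nonneg fun i _ => mul_nonneg (hq0 i) (sq_nonneg _)
    have hres : ∀ i, ⟪θ - η • v, x i⟫ - y i = r i - η * s i := by
      intro i
      rw [inner_sub_left, real_inner_smul_left, hs, hr]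
      ring
    have hlhs : (∑ i, q i * (⟪θ - η • ∑ j, (q j * (⟪θ, x j⟫ - y j)) • x j, x i⟫ - y i) ^ 2)
        = F - 2 * η * (∑ i, w i * s i) + η ^ 2 * (∑ i, q i * s i ^ 2) := by
      have : (∑ i, q i * (⟪θ - η • ∑ j, (q j * (⟪θ, x j⟫ - y j)) • x j, x i⟫ - y i) ^ 2)
          = ∑ i, q i * (r i - η * s i) ^ 2 :=
        Finset.sum_congr rfl fun i _ => by rw [← hres i]
      rw [this, hF, Finset.mul_sum, Finset.mul_sum, ← Finset.sum_sub_distrib,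
        ← Finset.sum_add_distrib]
      exact Finset.sum_congr rfl fun i _ => by rw [hw]; ring
    -- the Gram quadratic form
    have hsi : ∀ i, s i = ∑ j, w j * ⟪x j, x i⟫ := by
      intro i
      rw [hs]
      simp only
      rw [hv, sum_inner]
      exact Finset.sum_congr rfl fun j _ => real_inner_smul_left _ _ _
    have hGv : w ⬝ᵥ (Matrix.of fun i j => ⟪x i, x j⟫ : Matrix (Fin n) (Fin n) ℝ) *ᵥ w
        = ∑ i, w i * s i := by
      simp only [dotProduct, Matrix.mulVec, Matrix.of_apply]
      refine Finset.sum_congr rfl fun i _ => ?_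
      rw [hsi i, Finset.mul_sum, Finset.mul_sum]
      refine Finset.sum_congr rfl fun j _ => ?_
      rw [real_inner_comm (x j) (x i)]
      ring
    -- first-order term lower bound
    have hwwF : qstar * F ≤ w ⬝ᵥ w := by
      rw [hF, Finset.mul_sum, dotProduct]
      refine Finset.sum_le_sum fun i _ => ?_
      have h1 : qstar * (q i * r i ^ 2) ≤ q i * (q i * r i ^ 2) :=
        mul_le_mul_of_nonneg_right (hq_le i) (mul_nonneg (hq0 i) (sq_nonneg _))
      calc qstar * (q i * r i ^ 2) ≤ q i * (q i * r i ^ 2) := h1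
        _ = w i * w i := by rw [hw]; ring
    have h1 : qstar * lammin * F ≤ ∑ i, w i * s i := by
      calc qstar * lammin * F = lammin * (qstar * F) := by ring
        _ ≤ lammin * (w ⬝ᵥ w) := mul_le_mul_of_nonneg_left hwwF hlam0
        _ ≤ w ⬝ᵥ (Matrix.of fun i j => ⟪x i, x j⟫ : Matrix (Fin n) (Fin n) ℝ) *ᵥ w :=
            rayleigh_low hG w lammin hlam_le
        _ = ∑ i, w i * s i := hGv
    -- second-order term upper bound
    have hnv : ⟪v, v⟫ ≤ A * F := by
      have hvle : ‖v‖ ≤ ∑ i, (Real.sqrt (q i) * |r i|) * (Real.sqrt (q i) * ‖x i‖) := by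
        refine (norm_sum_le _ _).trans (le_of_eq (Finset.sum_congr rfl fun i _ => ?_))
        rw [norm_smul, hw]
        simp only [Real.norm_eq_abs]
        rw [abs_mul, abs_of_nonneg (hq0 i)]
        have hms : Real.sqrt (q i) * Real.sqrt (q i) = q i := Real.mul_self_sqrt (hq0 i)
        linear_combination (-(|r i| * ‖x i‖)) * hms
      have hcs : (∑ i, (Real.sqrt (q i) * |r i|) * (Real.sqrt (q i) * ‖x i‖)) ^ 2
          ≤ (∑ i, (Real.sqrt (q i) * |r i|) ^ 2) * ∑ i, (Real.sqrt (q i) * ‖x i‖) ^ 2 :=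
        Finset.sum_mul_sq_le_sq_mul_sq _ _ _
      have e1 : (∑ i, (Real.sqrt (q i) * |r i|) ^ 2) = F := by
        rw [hF]
        refine Finset.sum_congr rfl fun i _ => ?_
        rw [mul_pow, Real.sq_sqrt (hq0 i), sq_abs]
      have e2 : (∑ i, (Real.sqrt (q i) * ‖x i‖) ^ 2) ≤ A := by
        rw [hA]
        refine Finset.sum_le_sum fun i _ => ?_
        rw [mul_pow, Real.sq_sqrt (hq0 i)]
        calc q i * ‖x i‖ ^ 2 ≤ 1 * ‖x i‖ ^ 2 :=
              mul_le_mul_of_nonneg_right (hq_le1 i) (sq_nonneg _)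
          _ = ‖x i‖ ^ 2 := one_mul _
      have hvn : ⟪v, v⟫ = ‖v‖ ^ 2 := real_inner_self_eq_norm_sq v
      have hsumnn : 0 ≤ ∑ i, (Real.sqrt (q i) * |r i|) * (Real.sqrt (q i) * ‖x i‖) :=
        Finset.sum_nonneg fun i _ => mul_nonneg
          (mul_nonneg (Real.sqrt_nonneg _) (abs_nonneg _))
          (mul_nonneg (Real.sqrt_nonneg _) (norm_nonneg _))
      calc ⟪v, v⟫ = ‖v‖ ^ 2 := hvn
        _ ≤ (∑ i, (Real.sqrt (q i) * |r i|) * (Real.sqrt (q i) * ‖x i‖)) ^ 2 :=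
            pow_le_pow_left₀ (norm_nonneg _) hvle 2
        _ ≤ (∑ i, (Real.sqrt (q i) * |r i|) ^ 2) * ∑ i, (Real.sqrt (q i) * ‖x i‖) ^ 2 := hcs
        _ ≤ F * A := by
            rw [e1]
            exact mul_le_mul_of_nonneg_left e2 hF0
        _ = A * F := mul_comm _ _
    have h2 : (∑ i, q i * s i ^ 2) ≤ A ^ 2 * F := by
      have hterm : ∀ i ∈ Finset.univ, q i * s i ^ 2 ≤ ⟪v, v⟫ * ‖x i‖ ^ 2 := by
        intro i _
        have hcs := real_inner_mul_inner_self_le v (x i)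
        have : s i ^ 2 ≤ ⟪v, v⟫ * ‖x i‖ ^ 2 := by
          rw [hs]
          calc ⟪v, x i⟫ ^ 2 = ⟪v, x i⟫ * ⟪v, x i⟫ := sq ⟪v, x i⟫
            _ ≤ ⟪v, v⟫ * ⟪x i, x i⟫ := hcs
            _ = ⟪v, v⟫ * ‖x i‖ ^ 2 := by rw [real_inner_self_eq_norm_sq (x i)]
        calc q i * s i ^ 2 ≤ 1 * s i ^ 2 :=
              mul_le_mul_of_nonneg_right (hq_le1 i) (sq_nonneg _)
          _ = s i ^ 2 := one_mul _
          _ ≤ ⟪v, v⟫ * ‖x i‖ ^ 2 := this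
      calc (∑ i, q i * s i ^ 2) ≤ ∑ i, ⟪v, v⟫ * ‖x i‖ ^ 2 := Finset.sum_le_sum hterm
        _ = ⟪v, v⟫ * A := by rw [← Finset.mul_sum, hA]
        _ ≤ A * F * A := mul_le_mul_of_nonneg_right hnv hA0
        _ = A ^ 2 * F := by ring
    rw [hlhs]
    have hb1 : 2 * η * (qstar * lammin * F) ≤ 2 * η * (∑ i, w i * s i) :=
      mul_le_mul_of_nonneg_left h1 (by linarith)
    have hb2 : η ^ 2 * (∑ i, q i * s i ^ 2) ≤ η ^ 2 * (A ^ 2 * F) :=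
      mul_le_mul_of_nonneg_left h2 (sq_nonneg _)
    have : (1 - 2 * η * qstar * lammin + A ^ 2 * η ^ 2) * F
        = F - 2 * η * (qstar * lammin * F) + η ^ 2 * (A ^ 2 * F) := by ring
    rw [hF] at *
    linarith
  refine ⟨step, ?_⟩
  intro η hη hη' θ hrec
  set F : ℕ → ℝ := fun t => ∑ i, q i * (⟪θ t, x i⟫ - y i) ^ 2 with hFdef
  have hF0 : ∀ t, 0 ≤ F t :=
    fun t => Finset.sum_nonneg fun i _ => mul_nonneg (hq0 i) (sq_nonneg _)
  have hfac : 1 - 2 * η * qstar * lammin + A ^ 2 * η ^ 2 ≤ 1 - η * qstar * lammin := by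
    rcases eq_or_ne A 0 with h | h
    · have : 0 < η * qstar * lammin := by positivity
      rw [h]
      nlinarith
    · have hA2 : 0 < A ^ 2 := by positivity
      have hmul : η * A ^ 2 ≤ qstar * lammin := (le_div_iff₀ hA2).mp hη'
      nlinarith
  have key : ∀ t, F (t + 1) ≤ (1 - η * qstar * lammin) * F t := by
    intro t
    have h1 : F (t + 1) ≤ (1 - 2 * η * qstar * lammin + A ^ 2 * η ^ 2) * F t := by
      rw [hFdef]
      simp only
      rw [hrec t]
      exact step η hη (θ t)
    calc F (t + 1) ≤ (1 - 2 * η * qstar * lammin + A ^ 2 * η ^ 2) * F t := h1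
      _ ≤ (1 - η * qstar * lammin) * F t :=
          mul_le_mul_of_nonneg_right hfac (hF0 t)
  refine ⟨key, ?_⟩
  set c : ℝ := max (1 - η * qstar * lammin) 0 with hc
  have hc0 : 0 ≤ c := le_max_right _ _
  have hc1 : c < 1 := by
    apply max_lt _ one_pos
    have : 0 < η * qstar * lammin := by positivity
    linarith
  have hstep' : ∀ t, F (t + 1) ≤ c * F t := fun t =>
    (key t).trans (mul_le_mul_of_nonneg_right (le_max_left _ _) (hF0 t))
  have hbound : ∀ t, F t ≤ c ^ t * F 0 := by
    intro t
    induction t with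
    | zero => simp
    | succ t ih =>
      calc F (t + 1) ≤ c * F t := hstep' t
        _ ≤ c * (c ^ t * F 0) := mul_le_mul_of_nonneg_left ih hc0
        _ = c ^ (t + 1) * F 0 := by ring
  have hpow : Tendsto (fun t : ℕ => c ^ t * F 0) atTop (nhds 0) := by
    simpa using (tendsto_pow_atTop_nhds_zero_of_lt_one hc0 hc1).mul_const (F 0)
  exact squeeze_zero hF0 hbound hpow
end

section
/- Suppose x₁,…,xₙ are linearly independent and the GRW weights satisfy Assumption 3. If the empirical risk satisfies R̂(θ^{(t)}) → 0 as t → ∞ and θ^{(t)} / ‖θ^{(t)}‖₂ → u for some unit vector u, then u is the max-margin classifier: for every unit vector θ ∈ ℝ^d, minᵢ yᵢ⟨θ,xᵢ⟩ ≤ minᵢ yᵢ⟨u,xᵢ⟩. -/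
open scoped RealInnerProductSpace
open Filter

set_option maxHeartbeats 2000000

/-- For linearly independent data and GRW weights with positive
liminf (Assumption 3), if the logistic empirical risk tends to `0` and the
normalized iterates `θ^{(t)}/‖θ^{(t)}‖` converge to a unit vector `u`, then `u`
is the max-margin classifier. -/
theorem stmt_5 {d n : ℕ} (hn : 0 < n)
    (x : Fin n → EuclideanSpace ℝ (Fin d)) (hx : ∀ i, ‖x i‖ ≤ 1)
    (y : Fin n → ℝ) (hy : ∀ i, y i = 1 ∨ y i = -1)
    (hli : LinearIndependent ℝ x)
    (q : ℕ → Fin n → ℝ)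
    (hq0 : ∀ t i, 0 ≤ q t i)
    (hq1 : ∀ t, ∑ i, q t i = 1)
    (hliminf : ∀ i, 0 < Filter.liminf (fun t => q t i) atTop)
    (η : ℝ) (hη : 0 < η)
    (θ : ℕ → EuclideanSpace ℝ (Fin d))
    (hupd : ∀ t, θ (t + 1) = θ t
      + η • ∑ i, (q t i * y i / (1 + Real.exp (y i * ⟪θ t, x i⟫))) • x i)
    (hrisk : Tendsto
      (fun t => (1 / (n : ℝ)) * ∑ i, Real.log (1 + Real.exp (-(⟪θ t, x i⟫ * y i))))
      atTop (nhds 0))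
    (u : EuclideanSpace ℝ (Fin d)) (hu : ‖u‖ = 1)
    (hdir : Tendsto (fun t => ‖θ t‖⁻¹ • θ t) atTop (nhds u)) :
    ∀ v : EuclideanSpace ℝ (Fin d), ‖v‖ = 1 →
      (⨅ i, y i * ⟪v, x i⟫) ≤ ⨅ i, y i * ⟪u, x i⟫ := by
  classical
  haveI : Nonempty (Fin n) := ⟨⟨0, hn⟩⟩
  -- basic facts about labels
  have hy2 : ∀ i, y i * y i = 1 := by
    intro i; rcases hy i with h | h <;> rw [h] <;> norm_num
  -- margins of u
  set m : Fin n → ℝ := fun i => y i * ⟪u, x i⟫ with hm_def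
  set g : ℕ → Fin n → ℝ := fun t i => y i * ⟪θ t, x i⟫ with hg_def
  set p : ℕ → Fin n → ℝ := fun t i => q t i / (1 + Real.exp (g t i)) with hp_def
  set S : ℕ → Fin n → ℝ := fun t i => ∑ s ∈ Finset.range t, p s i with hS_def
  have hexp_pos : ∀ z : ℝ, (0:ℝ) < 1 + Real.exp z := fun z => by positivity
  have hp0 : ∀ t i, 0 ≤ p t i := fun t i =>
    div_nonneg (hq0 t i) (hexp_pos _).le
  have hS0 : ∀ t i, 0 ≤ S t i := fun t i =>
    Finset.sum_nonneg fun s _ => hp0 s i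
  have hq_le1 : ∀ t i, q t i ≤ 1 := by
    intro t i
    calc q t i ≤ ∑ j, q t j :=
          Finset.single_le_sum (fun j _ => hq0 t j) (Finset.mem_univ i)
      _ = 1 := hq1 t
  -- Step 1 : each risk term tends to 0
  have hterm0 : ∀ i, Tendsto (fun t => Real.log (1 + Real.exp (-(g t i)))) atTop (nhds 0) := by
    intro i
    have hsum : Tendsto (fun t => ∑ j, Real.log (1 + Real.exp (-(g t j)))) atTop (nhds 0) := by
      have hne : (n:ℝ) ≠ 0 := Nat.cast_ne_zero.mpr hn.ne'
      have h := hrisk.const_mul (n:ℝ)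
      rw [mul_zero] at h
      have heq : ∀ t : ℕ, (n:ℝ) * (1 / (n:ℝ) *
          ∑ i, Real.log (1 + Real.exp (-(⟪θ t, x i⟫ * y i)))) =
          ∑ j, Real.log (1 + Real.exp (-(g t j))) := by
        intro t
        rw [← mul_assoc, mul_one_div, div_self hne, one_mul]
        refine Finset.sum_congr rfl fun j _ => ?_
        rw [mul_comm (⟪θ t, x j⟫) (y j)]
      simp only [heq] at h
      exact h
    have hnn : ∀ (t : ℕ) (k : Fin n), 0 ≤ Real.log (1 + Real.exp (-(g t k))) :=
      fun t k => Real.log_nonneg (le_add_of_nonneg_right (Real.exp_pos _).le)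
    apply squeeze_zero (fun t => hnn t i) (fun t => ?_) hsum
    exact Finset.single_le_sum (fun j _ => hnn t j) (Finset.mem_univ i)
  -- Step 2 : margins tend to infinity
  have hgtop : ∀ i, Tendsto (fun t => g t i) atTop atTop := by
    intro i
    have hexp0 : Tendsto (fun t => Real.exp (-(g t i))) atTop (nhds 0) := by
      have h1 : Tendsto (fun t => Real.exp (Real.log (1 + Real.exp (-(g t i))))) atTop
          (nhds (Real.exp 0)) := (Real.continuous_exp.tendsto _).comp (hterm0 i)
      have h2 : ∀ t, Real.exp (Real.log (1 + Real.exp (-(g t i)))) =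
          1 + Real.exp (-(g t i)) := fun t => Real.exp_log (hexp_pos _)
      simp only [h2, Real.exp_zero] at h1
      have := h1.sub (tendsto_const_nhds (x := (1:ℝ)))
      simpa using this
    have hbot : Tendsto (fun t => -(g t i)) atTop atBot := by
      have hwithin : Tendsto (fun t => Real.exp (-(g t i))) atTop (nhdsWithin 0 (Set.Ioi 0)) :=
        tendsto_nhdsWithin_of_tendsto_nhds_of_eventually_within _ hexp0
          (Eventually.of_forall fun t => Real.exp_pos _)
      have h := Real.tendsto_log_nhdsGT_zero.comp hwithin
      have heq : (Real.log ∘ fun t => Real.exp (-(g t i))) = fun t => -(g t i) := by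
        funext t; simp [Real.log_exp]
      rwa [heq] at h
    exact tendsto_neg_atBot_iff.mp hbot
  -- Step 3 : ‖θ t‖ → ∞
  have hnormtop : Tendsto (fun t => ‖θ t‖) atTop atTop := by
    set i0 : Fin n := ⟨0, hn⟩
    apply tendsto_atTop_mono _ (hgtop i0)
    intro t
    have h1 : g t i0 ≤ |⟪θ t, x i0⟫| := by
      calc g t i0 ≤ |g t i0| := le_abs_self _
        _ = |y i0| * |⟪θ t, x i0⟫| := abs_mul _ _
        _ = |⟪θ t, x i0⟫| := by
            rcases hy i0 with h | h <;> rw [h] <;> norm_num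
    have h2 : |⟪θ t, x i0⟫| ≤ ‖θ t‖ * ‖x i0‖ := abs_real_inner_le_norm _ _
    have h3 : ‖θ t‖ * ‖x i0‖ ≤ ‖θ t‖ * 1 :=
      mul_le_mul_of_nonneg_left (hx i0) (norm_nonneg _)
    linarith
  have hninv : Tendsto (fun t => ‖θ t‖⁻¹) atTop (nhds 0) := hnormtop.inv_tendsto_atTop
  -- Step 4 : normalized margins converge
  have hratio : ∀ i, Tendsto (fun t => ‖θ t‖⁻¹ * g t i) atTop (nhds (m i)) := by
    intro i
    have h1 : Tendsto (fun t => ⟪‖θ t‖⁻¹ • θ t, x i⟫) atTop (nhds ⟪u, x i⟫) :=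
      hdir.inner tendsto_const_nhds
    have h2 := h1.const_mul (y i)
    convert h2 using 2 with t
    rw [real_inner_smul_left]; ring
  -- Step 5 : closed-form expansion of iterates
  have htheta : ∀ t, θ t = θ 0 + ∑ i, (η * (y i * S t i)) • x i := by
    intro t
    induction t with
    | zero => simp [hS_def]
    | succ t IH =>
      rw [hupd t]
      nth_rewrite 1 [IH]
      rw [add_assoc]
      congr 1
      rw [Finset.smul_sum, ← Finset.sum_add_distrib]
      refine Finset.sum_congr rfl fun i _ => ?_
      rw [smul_smul, ← add_smul]
      congr 1
      simp only [hS_def, hp_def, hg_def, Finset.sum_range_succ]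
      ring
  -- Step 6 : the span and its basis
  set V : Submodule ℝ (EuclideanSpace ℝ (Fin d)) := Submodule.span ℝ (Set.range x) with hV_def
  haveI : FiniteDimensional ℝ V := FiniteDimensional.span_of_finite ℝ (Set.finite_range x)
  set b : Module.Basis (Fin n) ℝ V := Module.Basis.span hli with hb_def
  have hmemV : ∀ t, θ t - θ 0 ∈ V := by
    intro t
    rw [htheta t, add_sub_cancel_left]
    exact Submodule.sum_mem _ fun i _ =>
      Submodule.smul_mem _ _ (Submodule.subset_span (Set.mem_range_self i))
  have hconvV : Tendsto (fun t => ‖θ t‖⁻¹ • (θ t - θ 0)) atTop (nhds u) := by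
    have h2 : Tendsto (fun t => ‖θ t‖⁻¹ • θ 0) atTop (nhds ((0:ℝ) • θ 0)) :=
      hninv.smul_const (θ 0)
    rw [zero_smul] at h2
    have := hdir.sub h2
    rw [sub_zero] at this
    convert this using 2 with t
    rw [smul_sub]
  have huV : u ∈ V := by
    have hclosed : IsClosed (V : Set (EuclideanSpace ℝ (Fin d))) := Submodule.closed_of_finiteDimensional V
    exact hclosed.mem_of_tendsto hconvV
      (Eventually.of_forall fun t => Submodule.smul_mem _ _ (hmemV t))
  set u' : V := ⟨u, huV⟩ with hu'_def
  set W : ℕ → V := fun t => ⟨θ t - θ 0, hmemV t⟩ with hW_def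
  -- coordinate functionals
  set φ : Fin n → (V →ₗ[ℝ] ℝ) := fun i => (Finsupp.lapply i).comp b.repr.toLinearMap with hφ_def
  have hφcont : ∀ i, Continuous (φ i) := fun i =>
    (φ i).continuous_of_finiteDimensional
  have hbx : ∀ k, ((b k : V) : EuclideanSpace ℝ (Fin d)) = x k :=
    fun k => congrArg Subtype.val (Module.Basis.span_apply hli k)
  have hWrepr : ∀ t, W t = ∑ k, (η * (y k * S t k)) • b k := by
    intro t
    apply Subtype.ext
    push_cast
    simp only [hbx]
    show θ t - θ 0 = _
    rw [htheta t, add_sub_cancel_left]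
  have hφW : ∀ i t, φ i (W t) = η * (y i * S t i) := by
    intro i t
    rw [hWrepr t, map_sum]
    have : ∀ k, φ i ((η * (y k * S t k)) • b k) =
        (η * (y k * S t k)) * (if k = i then 1 else 0) := by
      intro k
      rw [map_smul]
      simp only [hφ_def, LinearMap.comp_apply, LinearEquiv.coe_toLinearMap,
        Module.Basis.repr_self, Finsupp.lapply_apply, Finsupp.single_apply, smul_eq_mul]
    simp only [this]
    rw [Finset.sum_eq_single i (fun k _ hk => by simp [hk])
      (fun h => absurd (Finset.mem_univ i) h)]
    simp
  set μ : Fin n → ℝ := fun i => φ i u' with hμ_def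
  set lam : Fin n → ℝ := fun i => y i * μ i with hlam_def
  have hWconv : Tendsto (fun t => (‖θ t‖⁻¹ • W t : V)) atTop (nhds u') := by
    refine (Topology.IsEmbedding.subtypeVal.tendsto_nhds_iff).mpr ?_
    simpa [Function.comp_def, hW_def] using hconvV
  have hlamlim : ∀ i, Tendsto (fun t => η * (‖θ t‖⁻¹ * S t i)) atTop (nhds (lam i)) := by
    intro i
    have h1 : Tendsto (fun t => φ i (‖θ t‖⁻¹ • W t)) atTop (nhds (φ i u')) :=
      ((hφcont i).tendsto _).comp hWconv
    have h2 : ∀ t, φ i (‖θ t‖⁻¹ • W t) = ‖θ t‖⁻¹ * (η * (y i * S t i)) := by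
      intro t; rw [map_smul, hφW i t, smul_eq_mul]
    simp only [h2] at h1
    have h3 := h1.const_mul (y i)
    convert h3 using 2 with t
    · calc η * (‖θ t‖⁻¹ * S t i)
          = (y i * y i) * (η * (‖θ t‖⁻¹ * S t i)) := by rw [hy2 i, one_mul]
        _ = y i * (‖θ t‖⁻¹ * (η * (y i * S t i))) := by ring
  have hlam0 : ∀ i, 0 ≤ lam i := by
    intro i
    refine ge_of_tendsto' (hlamlim i) fun t => ?_
    have := hS0 t i
    positivity
  have hμlam : ∀ i, μ i = y i * lam i := by
    intro i
    rw [hlam_def]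
    simp only
    rw [← mul_assoc, hy2 i, one_mul]
  have hurepr : u = ∑ i, (y i * lam i) • x i := by
    have h1 : ∑ i, (b.repr u') i • b i = u' := b.sum_repr u'
    have h2 : ∀ i, (b.repr u') i = μ i := fun i => rfl
    have h3 := congrArg (Subtype.val) h1
    push_cast at h3
    simp only [hbx, h2] at h3
    change _ = u at h3
    rw [← h3]
    apply Finset.sum_congr rfl
    intro i _
    rw [hμlam i]
  -- Step 8 : complementary slackness
  set mstar : ℝ := ⨅ i, m i with hmstar_def
  obtain ⟨j, hj⟩ := Finite.exists_min m
  have hmstar_eq : mstar = m j :=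
    le_antisymm (ciInf_le (Finite.bddBelow_range m) j) (le_ciInf hj)
  have hslack : ∀ i, mstar < m i → lam i = 0 := by
    intro i hmi
    refine le_antisymm ?_ (hlam0 i)
    have key : ∀ ε : ℝ, 0 < ε → lam i ≤ ε * lam j := by
      intro ε hε
      obtain ⟨κ, hκ0, hκlt⟩ : ∃ κ : ℝ, 0 < κ ∧ κ < liminf (fun t => q t j) atTop :=
        ⟨liminf (fun t => q t j) atTop / 2, by linarith [hliminf j], by linarith [hliminf j]⟩
      have e1 : ∀ᶠ t in atTop, κ < q t j :=
        eventually_lt_of_lt_liminf hκlt (Filter.isBoundedUnder_of ⟨0, fun t => hq0 t j⟩)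
      have e2 : ∀ᶠ t in atTop, 0 ≤ g t j := (hgtop j).eventually_ge_atTop 0
      set R : ℝ := -Real.log (ε * κ / 2) with hR_def
      have hδ : 0 < (m i - m j) / 2 := by rw [hmstar_eq] at hmi; linarith
      have hdiffTop : Tendsto (fun t => g t i - g t j) atTop atTop := by
        have hratio_diff : Tendsto (fun t => ‖θ t‖⁻¹ * g t i - ‖θ t‖⁻¹ * g t j) atTop
            (nhds (m i - m j)) := (hratio i).sub (hratio j)
        have hev : ∀ᶠ t in atTop, (m i - m j)/2 < ‖θ t‖⁻¹ * g t i - ‖θ t‖⁻¹ * g t j :=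
          hratio_diff.eventually_const_lt (by linarith)
        have hev2 : ∀ᶠ t in atTop, (1:ℝ) ≤ ‖θ t‖ := hnormtop.eventually_ge_atTop 1
        apply tendsto_atTop_mono' atTop
          (f₁ := fun t => ‖θ t‖ * ((m i - m j)/2))
          ?_ (hnormtop.atTop_mul_const hδ)
        filter_upwards [hev, hev2] with t h1 h2
        have hne : ‖θ t‖ ≠ 0 := by linarith
        have : g t i - g t j = ‖θ t‖ * (‖θ t‖⁻¹ * g t i - ‖θ t‖⁻¹ * g t j) := by
          field_simp
        rw [this]
        exact mul_le_mul_of_nonneg_left h1.le (by linarith)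
      have e3 : ∀ᶠ t in atTop, R ≤ g t i - g t j := hdiffTop.eventually_ge_atTop R
      have hEv : ∀ᶠ t in atTop, p t i ≤ ε * p t j := by
        filter_upwards [e1, e2, e3] with t hqj hgj hRt
        have hexpgi := Real.exp_pos (g t i)
        have hexpgj := Real.exp_pos (g t j)
        have h1 : p t i ≤ Real.exp (-(g t i)) := by
          rw [hp_def]
          rw [div_le_iff₀ (hexp_pos _)]
          have hmul : Real.exp (-(g t i)) * Real.exp (g t i) = 1 := by
            rw [← Real.exp_add]; simp
          nlinarith [hq_le1 t i, (Real.exp_pos (-(g t i))).le]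
        have h2 : κ / (2 * Real.exp (g t j)) ≤ p t j := by
          rw [hp_def]
          apply div_le_div₀ (hq0 t j) hqj.le (hexp_pos _)
          have := Real.one_le_exp hgj
          linarith
        have h3 : Real.exp (-(g t i)) ≤ (ε * κ / 2) * Real.exp (-(g t j)) := by
          have hek : Real.exp (g t j - g t i) ≤ ε * κ / 2 := by
            have hpos : (0:ℝ) < ε * κ / 2 := by positivity
            rw [← Real.exp_log hpos]
            exact Real.exp_le_exp.mpr (by rw [hR_def] at hRt; linarith)
          have : Real.exp (-(g t i)) = Real.exp (g t j - g t i) * Real.exp (-(g t j)) := by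
            rw [← Real.exp_add]; ring_nf
          rw [this]
          exact mul_le_mul_of_nonneg_right hek (Real.exp_pos _).le
        have h4 : (ε * κ / 2) * Real.exp (-(g t j)) = ε * (κ / (2 * Real.exp (g t j))) := by
          rw [Real.exp_neg]
          field_simp
        calc p t i ≤ Real.exp (-(g t i)) := h1
          _ ≤ (ε * κ / 2) * Real.exp (-(g t j)) := h3
          _ = ε * (κ / (2 * Real.exp (g t j))) := h4
          _ ≤ ε * p t j := mul_le_mul_of_nonneg_left h2 hε.le
      obtain ⟨T, hT⟩ := eventually_atTop.mp hEv
      have hsum_bound : ∀ t, T ≤ t → S t i ≤ S T i + ε * S t j := by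
        intro t ht
        have hsplit : S T i + ∑ s ∈ Finset.Ico T t, p s i = S t i :=
          Finset.sum_range_add_sum_Ico _ ht
        have h1 : ∑ s ∈ Finset.Ico T t, p s i ≤ ε * ∑ s ∈ Finset.Ico T t, p s j := by
          rw [Finset.mul_sum]
          exact Finset.sum_le_sum fun s hs => hT s (Finset.mem_Ico.mp hs).1
        have h2 : ∑ s ∈ Finset.Ico T t, p s j ≤ S t j := by
          apply Finset.sum_le_sum_of_subset_of_nonneg
          · intro s hs
            exact Finset.mem_range.mpr (Finset.mem_Ico.mp hs).2
          · intro s _ _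
            exact hp0 s j
        have h3 := mul_le_mul_of_nonneg_left h2 hε.le
        linarith
      have hrhs : Tendsto (fun t => η * (‖θ t‖⁻¹ * S T i) + ε * (η * (‖θ t‖⁻¹ * S t j)))
          atTop (nhds (ε * lam j)) := by
        have ha : Tendsto (fun t => η * (‖θ t‖⁻¹ * S T i)) atTop (nhds 0) := by
          have h := hninv.const_mul (η * S T i)
          rw [mul_zero] at h
          convert h using 2 with t
          ring
        have hb := (hlamlim j).const_mul ε
        have hab := ha.add hb
        rw [zero_add] at hab
        exact hab
      refine le_of_tendsto_of_tendsto (hlamlim i) hrhs ?_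
      filter_upwards [eventually_ge_atTop T] with t ht
      have hS_ineq := hsum_bound t ht
      have hc : (0:ℝ) ≤ ‖θ t‖⁻¹ := inv_nonneg.mpr (norm_nonneg _)
      have := mul_le_mul_of_nonneg_left hS_ineq (mul_nonneg hη.le hc)
      show η * (‖θ t‖⁻¹ * S t i) ≤ η * (‖θ t‖⁻¹ * S T i) + ε * (η * (‖θ t‖⁻¹ * S t j))
      nlinarith
    have hεle : ∀ ε' : ℝ, 0 < ε' → lam i ≤ ε' := by
      intro ε' hε'
      have hj1 : (0:ℝ) < lam j + 1 := by linarith [hlam0 j]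
      have hpos : 0 < ε' / (lam j + 1) := div_pos hε' hj1
      have hk := key _ hpos
      calc lam i ≤ ε' / (lam j + 1) * lam j := hk
        _ ≤ ε' := by
          rw [div_mul_eq_mul_div, div_le_iff₀ hj1]
          nlinarith [hlam0 j]
    by_contra hlt
    push_neg at hlt
    have := hεle (lam i / 2) (by linarith)
    linarith
  -- Step 9 : final computation
  intro v hv
  have hbdd : BddBelow (Set.range fun k => y k * ⟪v, x k⟫) := Finite.bddBelow_range _
  have hip_u : ⟪u, u⟫ = 1 := by
    rw [real_inner_self_eq_norm_mul_norm, hu]; norm_num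
  have hexp_u : ∑ i, lam i * m i = 1 := by
    have h2 : ⟪u, u⟫ = ∑ i, lam i * m i := by
      nth_rewrite 2 [hurepr]
      rw [inner_sum]
      refine Finset.sum_congr rfl fun i _ => ?_
      rw [real_inner_smul_right]
      show y i * lam i * ⟪u, x i⟫ = lam i * (y i * ⟪u, x i⟫)
      ring
    rw [← h2, hip_u]
  have hcs : ∑ i, lam i * m i = mstar * ∑ i, lam i := by
    rw [Finset.mul_sum]
    refine Finset.sum_congr rfl fun i _ => ?_
    rcases eq_or_lt_of_le (ciInf_le (Finite.bddBelow_range m) i : mstar ≤ m i) with h | h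
    · rw [← h]; ring
    · rw [hslack i h]; ring
  have hLam0sum : (0:ℝ) ≤ ∑ i, lam i := Finset.sum_nonneg fun i _ => hlam0 i
  have hLamPos : (0:ℝ) < ∑ i, lam i := by
    rcases hLam0sum.lt_or_eq with h | h
    · exact h
    · exfalso
      rw [hcs, ← h, mul_zero] at hexp_u
      norm_num at hexp_u
  have hvu : ⟪v, u⟫ ≤ 1 := by
    have h := real_inner_le_norm v u
    rwa [hv, hu, one_mul] at h
  have hlow : (⨅ k, y k * ⟪v, x k⟫) * (∑ i, lam i) ≤ ⟪v, u⟫ := by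
    have h1 : ⟪v, u⟫ = ∑ i, lam i * (y i * ⟪v, x i⟫) := by
      rw [hurepr, inner_sum]
      refine Finset.sum_congr rfl fun i _ => ?_
      rw [real_inner_smul_right]
      ring
    rw [h1]
    calc (⨅ k, y k * ⟪v, x k⟫) * (∑ i, lam i)
        = ∑ i, lam i * (⨅ k, y k * ⟪v, x k⟫) := by
          rw [Finset.mul_sum]
          exact Finset.sum_congr rfl fun i _ => mul_comm _ _
      _ ≤ ∑ i, lam i * (y i * ⟪v, x i⟫) :=
          Finset.sum_le_sum fun i _ =>
            mul_le_mul_of_nonneg_left (ciInf_le hbdd i) (hlam0 i)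
  have hfin : (⨅ k, y k * ⟪v, x k⟫) * (∑ i, lam i) ≤ mstar * (∑ i, lam i) := by
    calc (⨅ k, y k * ⟪v, x k⟫) * (∑ i, lam i) ≤ ⟪v, u⟫ := hlow
      _ ≤ 1 := hvu
      _ = ∑ i, lam i * m i := hexp_u.symm
      _ = mstar * ∑ i, lam i := hcs
  exact le_of_mul_le_mul_right hfin hLamPos
end

section
/- Suppose x₁,…,xₙ are linearly independent and the GRW weights satisfy Assumption 1, with limiting weights q₁,…,qₙ and F(θ) = Σᵢ qᵢ φ(yᵢ⟨θ,xᵢ⟩). Then there exists η₀ > 0 such that for every learning rate 0 < η ≤ η₀, F(θ^{(t)}) → 0 as t → ∞. -/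
set_option maxHeartbeats 1000000

open scoped RealInnerProductSpace
open Filter

lemma aux_tangent {φ φ' : ℝ → ℝ} (hφconv : ConvexOn ℝ Set.univ φ)
    (hφderiv : ∀ a : ℝ, HasDerivAt φ (φ' a) a) (a b : ℝ) :
    φ a + φ' a * (b - a) ≤ φ b := by
  rcases lt_trichotomy a b with h | rfl | h
  · have := hφconv.le_slope_of_hasDerivAt (Set.mem_univ a) (Set.mem_univ b) h (hφderiv a)
    rw [slope_def_field] at this
    have hb : 0 < b - a := by linarith
    rw [le_div_iff₀ hb] at this
    nlinarith [this]
  · simp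
  · have := hφconv.slope_le_of_hasDerivAt (Set.mem_univ b) (Set.mem_univ a) h (hφderiv a)
    rw [slope_def_field] at this
    have hb : 0 < a - b := by linarith
    rw [div_le_iff₀ hb] at this
    nlinarith [this]

lemma aux_smooth {φ φ' : ℝ → ℝ} {L : NNReal}
    (hφderiv : ∀ a : ℝ, HasDerivAt φ (φ' a) a)
    (hφlip : LipschitzWith L φ') (a b : ℝ) :
    φ b ≤ φ a + φ' a * (b - a) + L / 2 * (b - a)^2 := by
  set ψ : ℝ → ℝ := fun x => φ a + φ' a * (x - a) + L / 2 * (x - a)^2 - φ x with hψ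
  have hφcont : Continuous φ := by
    rw [continuous_iff_continuousAt]; exact fun x => (hφderiv x).continuousAt
  have hcont : Continuous ψ := by
    apply Continuous.sub _ hφcont
    continuity
  have hder : ∀ x, HasDerivAt ψ (φ' a + L * (x - a) - φ' x) x := by
    intro x
    have this1 : HasDerivAt (fun x : ℝ => x - a) 1 x := (hasDerivAt_id x).sub_const a
    have h2 : HasDerivAt (fun x : ℝ => (x - a)^2) (2 * (x - a)) x := by
      have := this1.fun_pow 2
      simpa using this
    have h1 := (((this1.const_mul (φ' a)).const_add (φ a)).fun_add (h2.const_mul ((L : ℝ)/2)))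
    have := h1.fun_sub (hφderiv x)
    exact this.congr_deriv (by ring)
  have hlipb : ∀ x : ℝ, |φ' x - φ' a| ≤ L * |x - a| := by
    intro x
    have := hφlip.dist_le_mul x a
    simpa [Real.dist_eq] using this
  have key : ∀ x, 0 ≤ ψ x := by
    intro b
    rcases le_total a b with h | h
    · have hmono : MonotoneOn ψ (Set.Ici a) := by
        apply monotoneOn_of_deriv_nonneg (convex_Ici a) hcont.continuousOn
        · intro x _
          exact (hder x).differentiableAt.differentiableWithinAt
        · intro x hx
          rw [interior_Ici] at hx
          rw [(hder x).deriv]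
          have hxa : (0:ℝ) < x - a := by simpa [sub_pos] using hx
          have h3 := abs_le.1 (hlipb x)
          rw [abs_of_pos hxa] at h3
          linarith [h3.1, h3.2]
      have h0 : ψ a = 0 := by simp [hψ]
      have := hmono Set.self_mem_Ici (by simpa using h) h
      linarith
    · have hanti : AntitoneOn ψ (Set.Iic a) := by
        apply antitoneOn_of_deriv_nonpos (convex_Iic a) hcont.continuousOn
        · intro x _
          exact (hder x).differentiableAt.differentiableWithinAt
        · intro x hx
          rw [interior_Iic] at hx
          rw [(hder x).deriv]
          have hxa : x - a < 0 := by simpa [sub_neg] using hx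
          have h3 := abs_le.1 (hlipb x)
          rw [abs_of_neg hxa] at h3
          linarith [h3.1, h3.2]
      have h0 : ψ a = 0 := by simp [hψ]
      have := hanti (by simpa using h) Set.self_mem_Iic h
      linarith
  have := key b
  simp only [hψ] at this
  linarith

lemma aux_dual {d n : ℕ} (x : Fin n → EuclideanSpace ℝ (Fin d))
    (hli : LinearIndependent ℝ x) (y : Fin n → ℝ) :
    ∃ u : EuclideanSpace ℝ (Fin d), ∀ i, ⟪u, x i⟫ = y i := by
  set W : Submodule ℝ (EuclideanSpace ℝ (Fin d)) := Submodule.span ℝ (Set.range x) with hW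
  let T : EuclideanSpace ℝ (Fin d) →ₗ[ℝ] (Fin n → ℝ) :=
    LinearMap.pi (fun i => (innerSL ℝ (x i)).toLinearMap)
  have hT : ∀ v : EuclideanSpace ℝ (Fin d), ∀ i, T v i = ⟪x i, v⟫ := fun v i => rfl
  let TW : W →ₗ[ℝ] (Fin n → ℝ) := T.domRestrict W
  have hinj : Function.Injective TW := by
    rw [← LinearMap.ker_eq_bot]
    rw [Submodule.eq_bot_iff]
    rintro ⟨w, hw⟩ hker
    have hz : ∀ i, ⟪x i, w⟫ = 0 := by
      intro i
      have := congrFun (show TW ⟨w, hw⟩ = 0 from hker) i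
      simpa [TW, hT] using this
    have : ⟪w, w⟫ = 0 := by
      have : ∀ v ∈ W, ⟪v, w⟫ = (0:ℝ) := by
        intro v hv
        induction hv using Submodule.span_induction with
        | mem v hv => obtain ⟨i, rfl⟩ := hv; exact hz i
        | zero => simp
        | add a b _ _ ha hb => rw [inner_add_left, ha, hb]; ring
        | smul c a _ ha => rw [real_inner_smul_left, ha]; ring
      exact this w hw
    have hw0 : w = 0 := by
      rwa [inner_self_eq_zero] at this
    simp [hw0]
  have hfr : Module.finrank ℝ W = Module.finrank ℝ (Fin n → ℝ) := by
    rw [hW, finrank_span_eq_card hli]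
    simp
  have hsurj : Function.Surjective TW :=
    (LinearMap.injective_iff_surjective_of_finrank_eq_finrank hfr).mp hinj
  obtain ⟨w, hw⟩ := hsurj y
  refine ⟨(w : EuclideanSpace ℝ (Fin d)), fun i => ?_⟩
  have := congrFun hw i
  rw [real_inner_comm]
  exact this

/-- For a positive, convex, `L`-smooth, strictly decreasing loss
`φ` with `φ(t) → 0` at `+∞`, linearly independent data, and GRW weights
satisfying Assumption 1 with limits `q₁,…,qₙ`, there exists `η₀ > 0` such that
for every `0 < η ≤ η₀`, `F(θ^{(t)}) = Σᵢ qᵢ φ(yᵢ⟨θ^{(t)},xᵢ⟩) → 0`. -/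
theorem stmt_7 {d n : ℕ} (hn : 0 < n)
    (x : Fin n → EuclideanSpace ℝ (Fin d)) (hx : ∀ i, ‖x i‖ ≤ 1)
    (y : Fin n → ℝ) (hy : ∀ i, y i = 1 ∨ y i = -1)
    (hli : LinearIndependent ℝ x)
    (φ φ' : ℝ → ℝ) (L : NNReal)
    (hφpos : ∀ t : ℝ, 0 < φ t)
    (hφconv : ConvexOn ℝ Set.univ φ)
    (hφderiv : ∀ a : ℝ, HasDerivAt φ (φ' a) a)
    (hφlip : LipschitzWith L φ')
    (hφanti : StrictAnti φ)
    (hφlim : Tendsto φ atTop (nhds 0))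
    (q : ℕ → Fin n → ℝ)
    (hq0 : ∀ t i, 0 ≤ q t i)
    (hq1 : ∀ t, ∑ i, q t i = 1)
    (qlim : Fin n → ℝ)
    (hqlim : ∀ i, Tendsto (fun t => q t i) atTop (nhds (qlim i)))
    (hqpos : ∀ i, 0 < qlim i) :
    ∃ η₀ > (0 : ℝ), ∀ η : ℝ, 0 < η → η ≤ η₀ →
      ∀ θ : ℕ → EuclideanSpace ℝ (Fin d),
        (∀ t, θ (t + 1) = θ t - η • ∑ i, (q t i * y i * φ' (y i * ⟪θ t, x i⟫)) • x i) →
        Tendsto (fun t => ∑ i, qlim i * φ (y i * ⟪θ t, x i⟫)) atTop (nhds 0) := by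
  obtain ⟨u, hu⟩ := aux_dual x hli y
  have hy2 : ∀ i, y i * y i = 1 := by
    intro i; rcases hy i with h | h <;> rw [h] <;> norm_num
  refine ⟨((L : ℝ) + 1)⁻¹, by positivity, ?_⟩
  intro η hη hηle θ hθ
  have hL0 : (0:ℝ) ≤ L := L.2
  have hηL : η * L ≤ 1 := by
    have h1 : (0:ℝ) < (L:ℝ) + 1 := by linarith
    have h2 : η * ((L:ℝ) + 1) ≤ 1 := by
      rw [← le_div_iff₀ h1]; simpa [one_div] using hηle
    nlinarith
  -- abbreviations
  set mg : EuclideanSpace ℝ (Fin d) → Fin n → ℝ := fun v i => y i * ⟪v, x i⟫ with hmg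
  set F : EuclideanSpace ℝ (Fin d) → ℝ := fun v => ∑ i, qlim i * φ (mg v i) with hF
  set G : ℕ → EuclideanSpace ℝ (Fin d) → ℝ := fun t v => ∑ i, q t i * φ (mg v i) with hG
  set g : ℕ → EuclideanSpace ℝ (Fin d) :=
    fun t => ∑ i, (q t i * y i * φ' (mg (θ t) i)) • x i with hg
  show Tendsto (fun t => F (θ t)) atTop (nhds 0)
  have hstep : ∀ t, θ (t + 1) = θ t - η • g t := fun t => hθ t
  -- basic facts
  have hFnonneg : ∀ v, 0 ≤ F v := by
    intro v
    apply Finset.sum_nonneg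
    intro i _
    exact mul_nonneg (hqpos i).le (hφpos _).le
  have hmg_bound : ∀ v i, |mg v i| ≤ ‖v‖ := by
    intro v i
    have h1 : |y i| = 1 := by rcases hy i with h | h <;> rw [h] <;> norm_num
    have h2 : |⟪v, x i⟫| ≤ ‖v‖ * ‖x i‖ := abs_real_inner_le_norm v (x i)
    have h3 : ‖v‖ * ‖x i‖ ≤ ‖v‖ := by
      nlinarith [norm_nonneg v, hx i, norm_nonneg (x i)]
    calc |mg v i| = |y i| * |⟪v, x i⟫| := abs_mul _ _
      _ = |⟪v, x i⟫| := by rw [h1, one_mul]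
      _ ≤ ‖v‖ := le_trans h2 h3
  have hmg_shift : ∀ (v : EuclideanSpace ℝ (Fin d)) (c : ℝ) i,
      mg (v + c • u) i = mg v i + c := by
    intro v c i
    simp only [hmg, inner_add_left, real_inner_smul_left, hu i]
    linear_combination c * hy2 i
  have hmg_lin : ∀ (v w : EuclideanSpace ℝ (Fin d)) i, mg v i - mg w i = mg (v - w) i := by
    intro v w i
    simp only [hmg, inner_sub_left]
    ring
  have hinner_g : ∀ t (w : EuclideanSpace ℝ (Fin d)),
      ⟪g t, w⟫ = ∑ i, q t i * φ' (mg (θ t) i) * mg w i := by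
    intro t w
    rw [hg]
    rw [sum_inner]
    refine Finset.sum_congr rfl (fun i _ => ?_)
    rw [real_inner_smul_left, real_inner_comm]
    simp only [hmg]
    ring
  -- descent lemma
  have hD1' : ∀ t, G t (θ (t + 1)) ≤ G t (θ t) - η * ‖g t‖^2 + L/2 * η^2 * ‖g t‖^2 := by
    intro t
    have hdm : ∀ i, mg (θ (t + 1)) i - mg (θ t) i = -(η * mg (g t) i) := by
      intro i
      rw [hmg_lin, hstep t]
      have : θ t - η • g t - θ t = -(η • g t) := by abel
      rw [this]
      simp only [hmg, inner_neg_left, real_inner_smul_left]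
      ring
    have hw2 : ∀ i, (mg (g t) i)^2 ≤ ‖g t‖^2 := by
      intro i
      have := hmg_bound (g t) i
      nlinarith [abs_nonneg (mg (g t) i), neg_abs_le (mg (g t) i), le_abs_self (mg (g t) i)]
    have key : ∀ i ∈ Finset.univ, q t i * φ (mg (θ (t + 1)) i) ≤
        q t i * φ (mg (θ t) i) - η * (q t i * φ' (mg (θ t) i) * mg (g t) i)
          + (L/2 * η^2 * ‖g t‖^2) * q t i := by
      intro i _
      have hsm := aux_smooth hφderiv hφlip (mg (θ t) i) (mg (θ (t + 1)) i)
      have hd := hdm i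
      have hqi := hq0 t i
      have hwi := hw2 i
      rw [hd] at hsm
      have h1 := mul_le_mul_of_nonneg_left hsm hqi
      have h2 : q t i * ((L:ℝ)/2 * η^2 * (mg (g t) i)^2)
          ≤ q t i * ((L:ℝ)/2 * η^2 * ‖g t‖^2) :=
        mul_le_mul_of_nonneg_left (mul_le_mul_of_nonneg_left hwi (by positivity)) hqi
      nlinarith [h1, h2]
    have hsum := Finset.sum_le_sum key
    have hRHS : ∑ i, (q t i * φ (mg (θ t) i) - η * (q t i * φ' (mg (θ t) i) * mg (g t) i)
          + (L/2 * η^2 * ‖g t‖^2) * q t i)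
        = G t (θ t) - η * ‖g t‖^2 + L/2 * η^2 * ‖g t‖^2 := by
      rw [Finset.sum_add_distrib, Finset.sum_sub_distrib, ← Finset.mul_sum, ← Finset.mul_sum,
        ← hinner_g t (g t), real_inner_self_eq_norm_sq, hq1 t]
      simp only [hG]
      ring
    calc G t (θ (t + 1)) = ∑ i, q t i * φ (mg (θ (t + 1)) i) := by simp only [hG]
      _ ≤ _ := hsum
      _ = _ := hRHS
  have hD1 : ∀ t, G t (θ (t + 1)) ≤ G t (θ t) := by
    intro t
    have := hD1' t
    nlinarith [sq_nonneg ‖g t‖, mul_nonneg (mul_nonneg hη.le hη.le) (sq_nonneg ‖g t‖)]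
  -- convexity lemma
  have hC1 : ∀ t (z : EuclideanSpace ℝ (Fin d)), G t (θ t) - G t z ≤ ⟪g t, θ t - z⟫ := by
    intro t z
    have key : ∀ i ∈ Finset.univ,
        q t i * φ (mg (θ t) i) + q t i * φ' (mg (θ t) i) * (mg z i - mg (θ t) i)
          ≤ q t i * φ (mg z i) := by
      intro i _
      have := aux_tangent hφconv hφderiv (mg (θ t) i) (mg z i)
      nlinarith [mul_le_mul_of_nonneg_left this (hq0 t i)]
    have hsum := Finset.sum_le_sum key
    rw [Finset.sum_add_distrib] at hsum
    have h2 : ∑ i, q t i * φ' (mg (θ t) i) * (mg z i - mg (θ t) i)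
        = ⟪g t, z - θ t⟫ := by
      rw [hinner_g t (z - θ t)]
      refine Finset.sum_congr rfl (fun i _ => ?_)
      rw [hmg_lin]
    rw [h2] at hsum
    have h3 : ⟪g t, z - θ t⟫ = -⟪g t, θ t - z⟫ := by
      rw [← inner_neg_right]
      congr 1
      abel
    rw [h3] at hsum
    simp only [hG] at hsum ⊢
    linarith
  -- distance identity
  have hdist : ∀ t (z : EuclideanSpace ℝ (Fin d)),
      ‖θ (t + 1) - z‖^2 = ‖θ t - z‖^2 - 2 * η * ⟪g t, θ t - z⟫ + η^2 * ‖g t‖^2 := by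
    intro t z
    rw [hstep t]
    have h1 : θ t - η • g t - z = (θ t - z) - η • g t := by abel
    rw [h1, norm_sub_sq_real]
    rw [real_inner_smul_right, real_inner_comm]
    rw [norm_smul]
    have : (‖η‖ * ‖g t‖)^2 = η^2 * ‖g t‖^2 := by
      rw [mul_pow]
      congr 1
      rw [Real.norm_eq_abs, sq_abs]
    rw [this]
    ring
  -- combined drop
  have hD2 : ∀ t (z : EuclideanSpace ℝ (Fin d)),
      ‖θ (t + 1) - z‖^2 ≤ ‖θ t - z‖^2 - 2 * η * (G t (θ (t + 1)) - G t z) := by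
    intro t z
    have h1 := hdist t z
    have h2 := hC1 t z
    have h3 := hD1' t
    nlinarith [sq_nonneg ‖g t‖, mul_nonneg (mul_nonneg hη.le hη.le) (sq_nonneg ‖g t‖),
      mul_le_mul_of_nonneg_left h2 (by linarith : (0:ℝ) ≤ 2 * η),
      mul_le_mul_of_nonneg_left h3 (by linarith : (0:ℝ) ≤ 2 * η),
      mul_nonneg (mul_nonneg (mul_nonneg hη.le hη.le) (sq_nonneg ‖g t‖))
        (by linarith : (0:ℝ) ≤ 1 - η * L)]
  -- G at anchor
  have hGz : ∀ t (z : EuclideanSpace ℝ (Fin d)) (s' : ℝ), (∀ i, s' ≤ mg z i) →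
      G t z ≤ φ s' := by
    intro t z s' hz
    have : ∀ i ∈ Finset.univ, q t i * φ (mg z i) ≤ q t i * φ s' := by
      intro i _
      exact mul_le_mul_of_nonneg_left (hφanti.antitone (hz i)) (hq0 t i)
    calc G t z ≤ ∑ i, q t i * φ s' := Finset.sum_le_sum this
      _ = φ s' := by rw [← Finset.sum_mul, hq1 t, one_mul]
  -- main epsilon argument
  rw [Metric.tendsto_atTop]
  intro ε hε
  haveI : Nonempty (Fin n) := ⟨⟨0, hn⟩⟩
  -- the minimum limiting weight
  set qs : ℝ := Finset.univ.inf' Finset.univ_nonempty qlim with hqs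
  have hqs_pos : 0 < qs := by
    rw [hqs, Finset.lt_inf'_iff]
    exact fun i _ => hqpos i
  have hqs_le : ∀ i, qs ≤ qlim i := fun i => Finset.inf'_le _ (Finset.mem_univ i)
  -- choose the anchor margin s
  set κ : ℝ := min (ε/16) (qs * φ 0 / 4) with hκ
  have hκpos : 0 < κ := lt_min (by linarith only [hε]) (by nlinarith only [hqs_pos, hφpos 0])
  obtain ⟨s, hs⟩ : ∃ s : ℝ, φ s < κ := (hφlim.eventually_lt_const hκpos).exists
  set P : ℝ := φ s with hPdef
  have hP : 0 < P := hφpos s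
  have hPε : P ≤ ε/16 := le_trans hs.le (min_le_left _ _)
  have hPq : P ≤ qs * φ 0 / 4 := le_trans hs.le (min_le_right _ _)
  set Mbar : ℝ := s^2 * ‖u‖^2 / (2*η*P) with hMbar
  have hM0 : 0 ≤ Mbar := div_nonneg (by positivity) (by nlinarith only [hη, hP])
  set δ' : ℝ := min (1/2) (Real.log 2 / (4*(Mbar+1))) with hδ'
  have hlog2 : 0 < Real.log 2 := Real.log_pos (by norm_num)
  have hδ'pos : 0 < δ' := lt_min (by norm_num) (div_pos hlog2 (by linarith only [hM0]))
  have hδ'half : δ' ≤ 1/2 := min_le_left _ _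
  have h1δ : (0:ℝ) < 1 - δ' := by linarith only [hδ'half]
  set δ : ℝ := δ' * qs with hδ
  have hδpos : 0 < δ := mul_pos hδ'pos hqs_pos
  set ρ : ℝ := (1+δ')/(1-δ') with hρ
  have hρ1 : 1 ≤ ρ := by rw [hρ, le_div_iff₀ h1δ]; linarith only [hδ'pos]
  have hρ0 : 0 ≤ ρ := le_trans zero_le_one hρ1
  have hρle : ρ ≤ 1 + 4*δ' := by
    rw [hρ, div_le_iff₀ h1δ]
    nlinarith only [mul_nonneg hδ'pos.le (show (0:ℝ) ≤ 1 - 2*δ' by linarith only [hδ'half])]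
  -- uniform weight closeness
  choose N hN using fun i => Metric.tendsto_atTop.1 (hqlim i) δ hδpos
  set T : ℕ := Finset.univ.sup N with hTdef
  have hT : ∀ t, T ≤ t → ∀ i, |q t i - qlim i| ≤ δ := by
    intro t ht i
    have := hN i t (le_trans (Finset.le_sup (Finset.mem_univ i)) ht)
    rw [Real.dist_eq] at this
    exact this.le
  -- comparisons between G and F
  have hsumφ : ∀ v, qs * (∑ i, φ (mg v i)) ≤ F v := by
    intro v
    rw [Finset.mul_sum]
    exact Finset.sum_le_sum fun i _ =>
      mul_le_mul_of_nonneg_right (hqs_le i) (hφpos _).le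
  have hφsum_nonneg : ∀ v, 0 ≤ ∑ i, φ (mg v i) :=
    fun v => Finset.sum_nonneg fun i _ => (hφpos _).le
  have hlow : ∀ t v, T ≤ t → (1 - δ') * F v ≤ G t v := by
    intro t v ht
    have h1 : ∑ i, (qlim i - δ) * φ (mg v i) ≤ G t v := by
      refine Finset.sum_le_sum fun i _ => ?_
      refine mul_le_mul_of_nonneg_right ?_ (hφpos _).le
      have := abs_le.1 (hT t ht i)
      linarith [this.1]
    have h2 : ∑ i, (qlim i - δ) * φ (mg v i) = F v - δ * ∑ i, φ (mg v i) := by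
      simp only [hF]
      rw [Finset.mul_sum, ← Finset.sum_sub_distrib]
      exact Finset.sum_congr rfl fun i _ => by ring
    have h3 : δ * ∑ i, φ (mg v i) ≤ δ' * F v := by
      calc δ * ∑ i, φ (mg v i) = δ' * (qs * ∑ i, φ (mg v i)) := by rw [hδ]; ring
        _ ≤ δ' * F v := mul_le_mul_of_nonneg_left (hsumφ v) hδ'pos.le
    linarith only [h1, h2, h3]
  have hupp : ∀ t v, T ≤ t → G t v ≤ (1 + δ') * F v := by
    intro t v ht
    have h1 : G t v ≤ ∑ i, (qlim i + δ) * φ (mg v i) := by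
      refine Finset.sum_le_sum fun i _ => ?_
      refine mul_le_mul_of_nonneg_right ?_ (hφpos _).le
      have := abs_le.1 (hT t ht i)
      linarith [this.2]
    have h2 : ∑ i, (qlim i + δ) * φ (mg v i) = F v + δ * ∑ i, φ (mg v i) := by
      simp only [hF]
      rw [Finset.mul_sum, ← Finset.sum_add_distrib]
      exact Finset.sum_congr rfl fun i _ => by ring
    have h3 : δ * ∑ i, φ (mg v i) ≤ δ' * F v := by
      calc δ * ∑ i, φ (mg v i) = δ' * (qs * ∑ i, φ (mg v i)) := by rw [hδ]; ring
        _ ≤ δ' * F v := mul_le_mul_of_nonneg_left (hsumφ v) hδ'pos.le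
    linarith only [h1, h2, h3]
  -- threshold
  set A : ℝ := 2 * P / (1 - δ') with hA
  have hApos : 0 < A := div_pos (by linarith) h1δ
  have hAe : (1 - δ') * A = 2 * P := by rw [hA]; field_simp
  have hA4P : A ≤ 4 * P := by
    rw [hA, div_le_iff₀ h1δ]
    nlinarith only [mul_nonneg hP.le (show (0:ℝ) ≤ 1 - 2*δ' by linarith only [hδ'half])]
  have hAq : A ≤ qs * φ 0 := by linarith only [hA4P, hPq]
  have hAε : A ≤ ε/4 := by linarith only [hA4P, hPε]
  -- key drop inequality
  have hKD : ∀ t (z : EuclideanSpace ℝ (Fin d)), T ≤ t → (∀ i, s ≤ mg z i) →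
      ‖θ (t+1) - z‖^2 ≤ ‖θ t - z‖^2 - 2*η*((1-δ') * F (θ (t+1)) - P) := by
    intro t z ht hz
    have h0 := hD2 t z
    have h1 := hlow t (θ (t+1)) ht
    have h2 := hGz t z s hz
    have h4 : (1-δ') * F (θ (t+1)) - P ≤ G t (θ (t+1)) - G t z := by
      rw [← hPdef] at h2
      linarith only [h1, h2]
    have h5 := mul_le_mul_of_nonneg_left h4 (by linarith only [hη] : (0:ℝ) ≤ 2*η)
    linarith only [h0, h5]
  -- bad runs force distance decrease
  have hBR : ∀ (a : ℕ) (z : EuclideanSpace ℝ (Fin d)), T ≤ a → (∀ i, s ≤ mg z i) →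
      ∀ k : ℕ, (∀ j : ℕ, 1 ≤ j → j ≤ k → A < F (θ (a + j))) →
      ‖θ (a + k) - z‖^2 ≤ ‖θ a - z‖^2 - k * (2*η*P) := by
    intro a z ha hz k
    induction k with
    | zero => intro _; simp
    | succ k ih =>
      intro hbad
      have ih' := ih (fun j h1 h2 => hbad j h1 (le_trans h2 (Nat.le_succ k)))
      have hkd := hKD (a+k) z (le_trans ha (Nat.le_add_right a k)) hz
      have hfa : A < F (θ (a + k + 1)) := hbad (k+1) (by omega) (le_refl _)
      have hstep2 : P ≤ (1 - δ') * F (θ (a + k + 1)) - P := by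
        have h6 := mul_le_mul_of_nonneg_left hfa.le h1δ.le
        linarith only [h6, hAe]
      have hcast : ((k+1 : ℕ):ℝ) = (k:ℝ)+1 := by push_cast; ring
      have hidx : a + (k+1) = (a + k) + 1 := by omega
      rw [hidx, hcast]
      have h7 := mul_le_mul_of_nonneg_left hstep2 (by linarith only [hη] : (0:ℝ) ≤ 2*η)
      linarith only [ih', hkd, h7]
  -- good times exist
  have hGood : ∀ b, T ≤ b → ∃ τ, b ≤ τ ∧ F (θ τ) ≤ A := by
    intro b hb
    by_contra hcon
    push_neg at hcon
    set z : EuclideanSpace ℝ (Fin d) := θ b + (‖θ b‖ + s) • u with hzdef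
    have hz : ∀ i, s ≤ mg z i := by
      intro i
      rw [hzdef, hmg_shift]
      have h1 := hmg_bound (θ b) i
      have h2 := neg_abs_le (mg (θ b) i)
      linarith
    obtain ⟨k, hk⟩ := exists_nat_gt ((‖θ b - z‖^2) / (2*η*P))
    have hbad : ∀ j, 1 ≤ j → j ≤ k → A < F (θ (b + j)) :=
      fun j _ _ => hcon (b+j) (Nat.le_add_right b j)
    have hbr := hBR b z hb hz k hbad
    have h2ηP : (0:ℝ) < 2*η*P := by nlinarith only [hη, hP]
    rw [div_lt_iff₀ h2ηP] at hk
    linarith only [hbr, hk, sq_nonneg ‖θ (b+k) - z‖]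
  -- one-step growth
  have hGrow : ∀ t, T ≤ t → F (θ (t+1)) ≤ ρ * F (θ t) := by
    intro t ht
    have h1 := hlow t (θ (t+1)) ht
    have h2 := hupp t (θ t) ht
    have h3 := hD1 t
    rw [hρ, div_mul_eq_mul_div, le_div_iff₀ h1δ]
    nlinarith only [h1, h2, h3]
  have hGrowIter : ∀ a, T ≤ a → ∀ k : ℕ, F (θ (a + k)) ≤ ρ^k * F (θ a) := by
    intro a ha k
    induction k with
    | zero => simp
    | succ k ih =>
      have hg1 := hGrow (a+k) (le_trans ha (Nat.le_add_right a k))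
      have hidx : a + (k+1) = (a + k) + 1 := by omega
      calc F (θ (a+(k+1))) = F (θ ((a+k)+1)) := by rw [hidx]
        _ ≤ ρ * F (θ (a+k)) := hg1
        _ ≤ ρ * (ρ^k * F (θ a)) := mul_le_mul_of_nonneg_left ih hρ0
        _ = ρ^(k+1) * F (θ a) := by ring
  -- power bound
  have hpow2 : ∀ k : ℕ, (k:ℝ) * (2*η*P) ≤ s^2 * ‖u‖^2 → ρ^k ≤ 2 := by
    intro k hk
    have hkM : (k:ℝ) ≤ Mbar := by
      rw [hMbar, le_div_iff₀ (by nlinarith only [hη, hP] : (0:ℝ) < 2*η*P)]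
      linarith only [hk]
    have hδ'2 : δ' ≤ Real.log 2 / (4*(Mbar+1)) := min_le_right _ _
    have h4 : 4 * δ' * (k:ℝ) ≤ Real.log 2 := by
      have hk1 : (k:ℝ) / (Mbar+1) ≤ 1 := by
        rw [div_le_one (by linarith only [hM0])]
        linarith only [hkM]
      have h5 : 4 * δ' * (k:ℝ) ≤ 4 * (Real.log 2 / (4*(Mbar+1))) * (k:ℝ) := by
        calc 4 * δ' * (k:ℝ) = δ' * (4*(k:ℝ)) := by ring
          _ ≤ (Real.log 2 / (4*(Mbar+1))) * (4*(k:ℝ)) :=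
              mul_le_mul_of_nonneg_right hδ'2 (by positivity)
          _ = 4 * (Real.log 2 / (4*(Mbar+1))) * (k:ℝ) := by ring
      have h6 : 4 * (Real.log 2 / (4*(Mbar+1))) * (k:ℝ) = Real.log 2 * ((k:ℝ)/(Mbar+1)) := by
        field_simp
      have h7 : Real.log 2 * ((k:ℝ)/(Mbar+1)) ≤ Real.log 2 * 1 :=
        mul_le_mul_of_nonneg_left hk1 hlog2.le
      rw [h6] at h5
      linarith only [h5, h7]
    calc ρ^k ≤ (1+4*δ')^k := pow_le_pow_left₀ hρ0 hρle k
      _ ≤ (Real.exp (4*δ'))^k := by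
          refine pow_le_pow_left₀ (by linarith) ?_ k
          linarith [Real.add_one_le_exp (4*δ')]
      _ = Real.exp ((k:ℝ) * (4*δ')) := by rw [Real.exp_nat_mul]
      _ ≤ Real.exp (Real.log 2) := by
          apply Real.exp_le_exp.2
          linarith only [h4]
      _ = 2 := Real.exp_log two_pos
  -- small F forces nonnegative margins
  have hmargin0 : ∀ v, F v ≤ qs * φ 0 → ∀ i, 0 ≤ mg v i := by
    intro v hv i
    by_contra hneg
    push_neg at hneg
    have hφi : φ 0 < φ (mg v i) := hφanti hneg
    have hterm : qlim i * φ (mg v i) ≤ F v := by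
      refine Finset.single_le_sum (f := fun j => qlim j * φ (mg v j)) ?_ (Finset.mem_univ i)
      exact fun j _ => mul_nonneg (hqpos j).le (hφpos _).le
    have h1 : qs * φ (mg v i) ≤ qlim i * φ (mg v i) :=
      mul_le_mul_of_nonneg_right (hqs_le i) (hφpos _).le
    linarith only [hv, hterm, h1, mul_lt_mul_of_pos_left hφi hqs_pos]
  -- stay small
  obtain ⟨τ, hτT, hτA⟩ := hGood T (le_refl T)
  have hlast : ∀ t, τ ≤ t → ∃ τ', τ ≤ τ' ∧ τ' ≤ t ∧ F (θ τ') ≤ A ∧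
      (∀ σ, τ' < σ → σ ≤ t → A < F (θ σ)) := by
    intro t ht
    induction t, ht using Nat.le_induction with
    | base => exact ⟨τ, le_refl τ, le_refl τ, hτA, fun σ h1 h2 => absurd (lt_of_lt_of_le h1 h2) (lt_irrefl τ)⟩
    | succ t ht ih =>
      rcases le_or_gt (F (θ (t+1))) A with hc | hc
      · refine ⟨t+1, le_trans ht (Nat.le_succ t), le_refl _, hc, fun σ h1 h2 => ?_⟩
        exact absurd (lt_of_lt_of_le h1 h2) (lt_irrefl _)
      · obtain ⟨τ', h1, h2, h3, h4⟩ := ih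
        refine ⟨τ', h1, le_trans h2 (Nat.le_succ t), h3, fun σ hs1 hs2 => ?_⟩
        rcases Nat.lt_or_ge σ (t+1) with h | h
        · exact h4 σ hs1 (Nat.lt_succ_iff.mp h)
        · have hσ : σ = t+1 := le_antisymm hs2 h
          rw [hσ]; exact hc
  have hfinal : ∀ t, τ ≤ t → F (θ t) ≤ 2 * A := by
    intro t ht
    obtain ⟨τ', h1, h2, h3, h4⟩ := hlast t ht
    set z : EuclideanSpace ℝ (Fin d) := θ τ' + s • u with hzdef
    have hz : ∀ i, s ≤ mg z i := by
      intro i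
      rw [hzdef, hmg_shift]
      have h0 := hmargin0 (θ τ') (le_trans h3 hAq) i
      linarith
    have hτ'T : T ≤ τ' := le_trans hτT h1
    set k := t - τ' with hk
    have hteq : τ' + k = t := Nat.add_sub_cancel' h2
    have hbad : ∀ j, 1 ≤ j → j ≤ k → A < F (θ (τ' + j)) := by
      intro j hj1 hj2
      exact h4 (τ' + j) (by omega) (by omega)
    have hBRk := hBR τ' z hτ'T hz k hbad
    have hzn : ‖θ τ' - z‖^2 = s^2 * ‖u‖^2 := by
      have hv : θ τ' - z = -(s • u) := by rw [hzdef]; abel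
      rw [hv, norm_neg, norm_smul, mul_pow, Real.norm_eq_abs, sq_abs]
    have hkP : (k:ℝ) * (2*η*P) ≤ s^2 * ‖u‖^2 := by
      linarith only [hBRk, hzn, sq_nonneg ‖θ (τ' + k) - z‖]
    have hρk := hpow2 k hkP
    have hgi := hGrowIter τ' hτ'T k
    rw [hteq] at hgi
    calc F (θ t) ≤ ρ^k * F (θ τ') := hgi
      _ ≤ 2 * A := by
          linarith only [mul_le_mul_of_nonneg_right hρk (hFnonneg (θ τ')), h3]
  refine ⟨τ, fun t ht => ?_⟩
  have := hfinal t ht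
  rw [Real.dist_eq, sub_zero, abs_of_nonneg (hFnonneg (θ t))]
  linarith only [this, hAε, hApos]
end

section
/- Suppose x₁,…,xₙ are linearly independent and the GRW weights satisfy Assumption 1. Then there exists η₀ > 0 such that for every learning rate 0 < η ≤ η₀, the iterate norms diverge: ‖θ^{(t)}‖₂ → ∞ as t → ∞. -/
open scoped RealInnerProductSpace
open Filter

lemma exists_dual_vec' {d n : ℕ} (x : Fin n → EuclideanSpace ℝ (Fin d))
    (hli : LinearIndependent ℝ x) (y : Fin n → ℝ) :
    ∃ u : EuclideanSpace ℝ (Fin d), ∀ i, ⟪x i, u⟫ = y i := by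
  classical
  let S : (Fin n → ℝ) →ₗ[ℝ] EuclideanSpace ℝ (Fin d) := Fintype.linearCombination ℝ x
  let G : (Fin n → ℝ) →ₗ[ℝ] (Fin n → ℝ) :=
    (LinearMap.pi fun i => (innerSL ℝ (x i)).toLinearMap).comp S
  have hGinj : Function.Injective G := by
    rw [← LinearMap.ker_eq_bot, LinearMap.ker_eq_bot']
    intro c hc
    have hexp : S c = ∑ j, c j • x j := rfl
    have h0 : ∀ i, ⟪x i, S c⟫ = 0 := fun i => congrFun hc i
    have h0' : ∀ i, ⟪x i, ∑ j, c j • x j⟫ = 0 := by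
      intro i; rw [← hexp]; exact h0 i
    have hz : S c = 0 := by
      rw [← @inner_self_eq_zero ℝ, hexp, sum_inner]
      simp only [real_inner_smul_left, h0', mul_zero, Finset.sum_const_zero]
    have := Fintype.linearIndependent_iff.mp hli c (by rw [← hexp]; exact hz)
    funext i; exact this i
  obtain ⟨c, hc⟩ := (LinearMap.injective_iff_surjective.mp hGinj) y
  exact ⟨S c, fun i => congrFun hc i⟩

/-- For a positive, convex, `L`-smooth, strictly decreasing loss
`φ` with `φ(t) → 0` at `+∞`, linearly independent data, and GRW weights
satisfying Assumption 1 with limits `q₁,…,qₙ`, there exists `η₀ > 0` such that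
for every `0 < η ≤ η₀`, the iterate norms diverge: `‖θ^{(t)}‖ → ∞`. -/
theorem stmt_8 {d n : ℕ} (hn : 0 < n)
    (x : Fin n → EuclideanSpace ℝ (Fin d)) (hx : ∀ i, ‖x i‖ ≤ 1)
    (y : Fin n → ℝ) (hy : ∀ i, y i = 1 ∨ y i = -1)
    (hli : LinearIndependent ℝ x)
    (φ φ' : ℝ → ℝ) (L : NNReal)
    (hφpos : ∀ t : ℝ, 0 < φ t)
    (hφconv : ConvexOn ℝ Set.univ φ)
    (hφderiv : ∀ a : ℝ, HasDerivAt φ (φ' a) a)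
    (hφlip : LipschitzWith L φ')
    (hφanti : StrictAnti φ)
    (hφlim : Tendsto φ atTop (nhds 0))
    (q : ℕ → Fin n → ℝ)
    (hq0 : ∀ t i, 0 ≤ q t i)
    (hq1 : ∀ t, ∑ i, q t i = 1)
    (qlim : Fin n → ℝ)
    (hqlim : ∀ i, Tendsto (fun t => q t i) atTop (nhds (qlim i)))
    (hqpos : ∀ i, 0 < qlim i) :
    ∃ η₀ > (0 : ℝ), ∀ η : ℝ, 0 < η → η ≤ η₀ →
      ∀ θ : ℕ → EuclideanSpace ℝ (Fin d),
        (∀ t, θ (t + 1) = θ t - η • ∑ i, (q t i * y i * φ' (y i * ⟪θ t, x i⟫)) • x i) →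
        Tendsto (fun t => ‖θ t‖) atTop atTop := by
  -- Basic facts about φ'
  have hmonoφ' : Monotone φ' := by
    intro a b hab
    rcases eq_or_lt_of_le hab with rfl | h
    · exact le_refl _
    calc φ' a ≤ slope φ a b :=
          hφconv.le_slope_of_hasDerivAt (Set.mem_univ a) (Set.mem_univ b) h (hφderiv a)
      _ ≤ φ' b :=
          hφconv.slope_le_of_hasDerivAt (Set.mem_univ a) (Set.mem_univ b) h (hφderiv b)
  have hneg : ∀ a : ℝ, φ' a < 0 := by
    intro a
    have h1 : φ' a ≤ slope φ a (a + 1) :=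
      hφconv.le_slope_of_hasDerivAt (Set.mem_univ a) (Set.mem_univ (a + 1))
        (by linarith) (hφderiv a)
    have h2 : slope φ a (a + 1) < 0 := by
      rw [slope_def_field]
      have h3 : φ (a + 1) < φ a := hφanti (by linarith)
      apply div_neg_of_neg_of_pos <;> linarith
    linarith
  obtain ⟨u, hu⟩ := exists_dual_vec' x hli y
  refine ⟨1, one_pos, fun η hη _ θ hrec => ?_⟩
  -- step formula for ⟪θ t, u⟫
  have hstep : ∀ t, ⟪θ (t + 1), u⟫ =
      ⟪θ t, u⟫ + η * ∑ i, q t i * (-(φ' (y i * ⟪θ t, x i⟫))) := by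
    intro t
    rw [hrec t, inner_sub_left, real_inner_smul_left, sum_inner]
    have hsum : ∑ i, ⟪(q t i * y i * φ' (y i * ⟪θ t, x i⟫)) • x i, u⟫
        = ∑ i, q t i * φ' (y i * ⟪θ t, x i⟫) := by
      refine Finset.sum_congr rfl fun i _ => ?_
      rw [real_inner_smul_left, hu i]
      rcases hy i with h | h <;> rw [h] <;> ring
    rw [hsum]
    simp only [mul_neg, Finset.sum_neg_distrib]
    ring
  have hmono : Monotone fun t => ⟪θ t, u⟫ := by
    apply monotone_nat_of_le_succ
    intro t
    rw [hstep t]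
    have hS : (0 : ℝ) ≤ ∑ i, q t i * (-(φ' (y i * ⟪θ t, x i⟫))) :=
      Finset.sum_nonneg fun i _ =>
        mul_nonneg (hq0 t i) (by linarith [hneg (y i * ⟪θ t, x i⟫)])
    nlinarith
  -- if the norm is small, the increment is large
  have hbig : ∀ b : ℝ, ∀ t, ‖θ t‖ ≤ b →
      ⟪θ t, u⟫ + η * (-(φ' b)) ≤ ⟪θ (t + 1), u⟫ := by
    intro b t hb
    rw [hstep t]
    have h1 : ∀ i, y i * ⟪θ t, x i⟫ ≤ b := by
      intro i
      have hy1 : |y i| = 1 := by rcases hy i with h | h <;> rw [h] <;> norm_num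
      have h2 : |y i * ⟪θ t, x i⟫| ≤ b := by
        rw [abs_mul, hy1, one_mul]
        calc |⟪θ t, x i⟫| ≤ ‖θ t‖ * ‖x i‖ := abs_real_inner_le_norm _ _
          _ ≤ b := by nlinarith [norm_nonneg (θ t), hx i, norm_nonneg (x i)]
      exact le_trans (le_abs_self _) h2
    have h3 : -(φ' b) ≤ ∑ i, q t i * (-(φ' (y i * ⟪θ t, x i⟫))) := by
      have h4 : -(φ' b) = ∑ i, q t i * (-(φ' b)) := by
        rw [← Finset.sum_mul, hq1 t, one_mul]
      rw [h4]
      exact Finset.sum_le_sum fun i _ =>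
        mul_le_mul_of_nonneg_left (neg_le_neg (hmonoφ' (h1 i))) (hq0 t i)
    have := mul_le_mul_of_nonneg_left h3 hη.le
    linarith
  rw [tendsto_atTop]
  intro b
  by_cases hcase : ∀ᶠ t in atTop, b ≤ ‖θ t‖
  · exact hcase
  · have hfreq : ∀ N : ℕ, ∃ t ≥ N, ‖θ t‖ < b := by
      simpa [not_eventually, not_le] using hcase
    set ε := η * (-(φ' b)) with hε
    have hεpos : 0 < ε := mul_pos hη (by linarith [hneg b])
    have hclaim : ∀ k : ℕ, ∃ t, ⟪θ 0, u⟫ + k * ε ≤ ⟪θ t, u⟫ := by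
      intro k
      induction k with
      | zero => exact ⟨0, by simp⟩
      | succ k ih =>
        obtain ⟨t, ht⟩ := ih
        obtain ⟨s, hst, hs⟩ := hfreq t
        refine ⟨s + 1, ?_⟩
        have h1 := hbig b s hs.le
        have h2 : ⟪θ t, u⟫ ≤ ⟪θ s, u⟫ := hmono hst
        push_cast
        linarith
    have hftop : Tendsto (fun t => ⟪θ t, u⟫) atTop atTop := by
      apply tendsto_atTop_atTop_of_monotone hmono
      intro c
      obtain ⟨k, hk⟩ := exists_nat_ge ((c - ⟪θ 0, u⟫) / ε)
      obtain ⟨t, ht⟩ := hclaim k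
      refine ⟨t, ?_⟩
      have h5 : c - ⟪θ 0, u⟫ ≤ (k : ℝ) * ε := by
        rw [div_le_iff₀ hεpos] at hk
        linarith
      linarith
    have hune : u ≠ 0 := by
      intro h
      have h6 := hu ⟨0, hn⟩
      rw [h, inner_zero_right] at h6
      rcases hy ⟨0, hn⟩ with h' | h' <;> rw [h'] at h6 <;> norm_num at h6
    have hupos : 0 < ‖u‖ := norm_pos_iff.mpr hune
    filter_upwards [hftop.eventually_ge_atTop (b * ‖u‖)] with t ht
    have h4 : ⟪θ t, u⟫ ≤ ‖θ t‖ * ‖u‖ := real_inner_le_norm _ _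
    nlinarith
end

section
/- Let q₁,…,qₙ > 0 with Σᵢ qᵢ = 1 and F(θ) = Σᵢ qᵢ φ(yᵢ⟨θ,xᵢ⟩). For every R > 0 such that min_{‖θ‖₂ ≤ R} F(θ) < minᵢ qᵢ φ(0), the minimizer of F over the closed ball {θ : ‖θ‖₂ ≤ R} is unique. -/
open scoped RealInnerProductSpace

/-- For positive weights summing to one and a positive, convex,
differentiable, strictly decreasing loss `φ`, if the minimum of
`F(θ) = Σᵢ qᵢ φ(yᵢ⟨θ,xᵢ⟩)` over the closed ball of radius `R` is below
`minᵢ qᵢ φ(0)`, then the minimizer of `F` over that ball is unique. -/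
theorem stmt_9 {d n : ℕ} (hn : 0 < n)
    (x : Fin n → EuclideanSpace ℝ (Fin d)) (hx : ∀ i, ‖x i‖ ≤ 1)
    (y : Fin n → ℝ) (hy : ∀ i, y i = 1 ∨ y i = -1)
    (φ : ℝ → ℝ)
    (hφpos : ∀ t : ℝ, 0 < φ t)
    (hφconv : ConvexOn ℝ Set.univ φ)
    (hφdiff : Differentiable ℝ φ)
    (hφanti : StrictAnti φ)
    (q : Fin n → ℝ) (hq0 : ∀ i, 0 < q i) (hq1 : ∑ i, q i = 1)
    (R : ℝ) (hR : 0 < R)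
    (hlow : ∃ θ : EuclideanSpace ℝ (Fin d), ‖θ‖ ≤ R ∧
      (∑ i, q i * φ (y i * ⟪θ, x i⟫)) < ⨅ i, q i * φ 0)
    (θ₁ θ₂ : EuclideanSpace ℝ (Fin d))
    (h₁ : ‖θ₁‖ ≤ R ∧ ∀ θ : EuclideanSpace ℝ (Fin d), ‖θ‖ ≤ R →
      (∑ i, q i * φ (y i * ⟪θ₁, x i⟫)) ≤ ∑ i, q i * φ (y i * ⟪θ, x i⟫))
    (h₂ : ‖θ₂‖ ≤ R ∧ ∀ θ : EuclideanSpace ℝ (Fin d), ‖θ‖ ≤ R →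
      (∑ i, q i * φ (y i * ⟪θ₂, x i⟫)) ≤ ∑ i, q i * φ (y i * ⟪θ, x i⟫)) :
    θ₁ = θ₂ := by
  classical
  set F : EuclideanSpace ℝ (Fin d) → ℝ :=
    fun θ => ∑ i, q i * φ (y i * ⟪θ, x i⟫) with hF
  obtain ⟨θ₀, hθ₀R, hθ₀⟩ := hlow
  -- every minimizer θ of F over the ball satisfies ‖θ‖ = R
  have key : ∀ θ : EuclideanSpace ℝ (Fin d), ‖θ‖ ≤ R →
      (∀ θ' : EuclideanSpace ℝ (Fin d), ‖θ'‖ ≤ R → F θ ≤ F θ') → ‖θ‖ = R := by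
    intro θ hθR hmin
    have hlt : F θ < ⨅ i, q i * φ 0 := lt_of_le_of_lt (hmin θ₀ hθ₀R) hθ₀
    have hpos : ∀ i, 0 < y i * ⟪θ, x i⟫ := by
      intro i
      have h1 : q i * φ (y i * ⟪θ, x i⟫) ≤ F θ := by
        apply Finset.single_le_sum (f := fun j => q j * φ (y j * ⟪θ, x j⟫))
        · intro j _
          exact le_of_lt (mul_pos (hq0 j) (hφpos _))
        · exact Finset.mem_univ i
      have h2 : F θ < q i * φ 0 :=
        lt_of_lt_of_le hlt (ciInf_le (Set.Finite.bddBelow (Set.finite_range _)) i)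
      have h3 : φ (y i * ⟪θ, x i⟫) < φ 0 :=
        lt_of_mul_lt_mul_left (lt_of_le_of_lt h1 h2) (le_of_lt (hq0 i))
      by_contra hc
      push_neg at hc
      exact absurd h3 (not_lt.mpr (hφanti.antitone hc))
    -- θ ≠ 0
    have hθ0 : θ ≠ 0 := by
      intro h0
      have := hpos ⟨0, hn⟩
      rw [h0] at this
      simp at this
    by_contra hne
    have hθRlt : ‖θ‖ < R := lt_of_le_of_ne hθR hne
    have hnθ : 0 < ‖θ‖ := norm_pos_iff.mpr hθ0
    set c : ℝ := R / ‖θ‖ with hc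
    have hc1 : 1 < c := (one_lt_div hnθ).mpr hθRlt
    have hcθ : ‖c • θ‖ ≤ R := by
      rw [norm_smul, Real.norm_eq_abs, abs_of_pos (lt_trans one_pos hc1), hc,
        div_mul_cancel₀ _ (ne_of_gt hnθ)]
    have hFlt : F (c • θ) < F θ := by
      apply Finset.sum_lt_sum_of_nonempty (Finset.univ_nonempty_iff.mpr
        (Fin.pos_iff_nonempty.mp hn))
      intro i _
      have hip : ⟪c • θ, x i⟫ = c * ⟪θ, x i⟫ := real_inner_smul_left _ _ _
      rw [hip]
      apply mul_lt_mul_of_pos_left _ (hq0 i)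
      apply hφanti
      have : y i * (c * ⟪θ, x i⟫) = c * (y i * ⟪θ, x i⟫) := by ring
      rw [this]
      exact lt_mul_of_one_lt_left (hpos i) hc1
    exact absurd (hmin _ hcθ) (not_le.mpr hFlt)
  obtain ⟨hθ₁R, hmin₁⟩ := h₁
  obtain ⟨hθ₂R, hmin₂⟩ := h₂
  have hn₁ : ‖θ₁‖ = R := key θ₁ hθ₁R hmin₁
  have hn₂ : ‖θ₂‖ = R := key θ₂ hθ₂R hmin₂
  by_contra hne
  set θm : EuclideanSpace ℝ (Fin d) := (1 / 2 : ℝ) • (θ₁ + θ₂) with hθm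
  have hmR : ‖θm‖ < R := by
    have := (norm_midpoint_lt_iff (hn₁.trans hn₂.symm)).mpr hne
    rwa [hn₁] at this
  have hFm : F θm ≤ F θ₁ := by
    have hconv : ∀ i : Fin n,
        q i * φ (y i * ⟪θm, x i⟫) ≤
          (1/2 : ℝ) * (q i * φ (y i * ⟪θ₁, x i⟫)) +
          (1/2 : ℝ) * (q i * φ (y i * ⟪θ₂, x i⟫)) := by
      intro i
      have hip : y i * ⟪θm, x i⟫ =
          (1/2 : ℝ) * (y i * ⟪θ₁, x i⟫) + (1/2 : ℝ) * (y i * ⟪θ₂, x i⟫) := by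
        rw [hθm, real_inner_smul_left, inner_add_left]; ring
      have := hφconv.2 (Set.mem_univ (y i * ⟪θ₁, x i⟫)) (Set.mem_univ (y i * ⟪θ₂, x i⟫))
        (by norm_num : (0:ℝ) ≤ 1/2) (by norm_num : (0:ℝ) ≤ 1/2) (by norm_num)
      rw [hip]
      calc q i * φ ((1/2 : ℝ) * (y i * ⟪θ₁, x i⟫) + (1/2 : ℝ) * (y i * ⟪θ₂, x i⟫))
          ≤ q i * ((1/2 : ℝ) * φ (y i * ⟪θ₁, x i⟫) + (1/2 : ℝ) * φ (y i * ⟪θ₂, x i⟫)) := by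
            apply mul_le_mul_of_nonneg_left _ (le_of_lt (hq0 i))
            simpa using this
        _ = (1/2 : ℝ) * (q i * φ (y i * ⟪θ₁, x i⟫)) +
            (1/2 : ℝ) * (q i * φ (y i * ⟪θ₂, x i⟫)) := by ring
    have h21 : F θ₂ ≤ F θ₁ := hmin₂ θ₁ hθ₁R
    calc F θm ≤ ∑ i, ((1/2 : ℝ) * (q i * φ (y i * ⟪θ₁, x i⟫)) +
          (1/2 : ℝ) * (q i * φ (y i * ⟪θ₂, x i⟫))) :=
        Finset.sum_le_sum (fun i _ => hconv i)
      _ = (1/2 : ℝ) * F θ₁ + (1/2 : ℝ) * F θ₂ := by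
          rw [hF]; simp [Finset.sum_add_distrib, Finset.mul_sum]
      _ ≤ (1/2 : ℝ) * F θ₁ + (1/2 : ℝ) * F θ₁ := by nlinarith
      _ = F θ₁ := by ring
  have hminm : ∀ θ' : EuclideanSpace ℝ (Fin d), ‖θ'‖ ≤ R → F θm ≤ F θ' :=
    fun θ' hθ' => le_trans hFm (hmin₁ θ' hθ')
  exact absurd (key θm (le_of_lt hmR) hminm) (ne_of_lt hmR)
end

section
/- Let q₁,…,qₙ > 0 with Σᵢ qᵢ = 1, suppose x₁,…,xₙ are linearly independent, and define the weighted logistic risk F(θ) = Σᵢ qᵢ log(1+exp(−yᵢ⟨θ,xᵢ⟩)). Let u be the unique max-margin classifier. Then lim_{R→∞} θ_R / R = u, in the sense that for every ε > 0 there exists R(ε) > 0 such that for every R ≥ R(ε), every minimizer θ_R of F over the closed ball {θ : ‖θ‖₂ ≤ R} satisfies ‖θ_R / R − u‖₂ < ε. -/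
open scoped RealInnerProductSpace
open Filter

private lemma ell_nonneg (t : ℝ) : 0 ≤ Real.log (1 + Real.exp t) :=
  Real.log_nonneg (by nlinarith [Real.exp_pos t])

private lemma ell_mono {a b : ℝ} (h : a ≤ b) :
    Real.log (1 + Real.exp (-b)) ≤ Real.log (1 + Real.exp (-a)) := by
  have := Real.exp_le_exp.mpr (neg_le_neg h)
  exact Real.log_le_log (by positivity) (by linarith)

private lemma ell_le (t : ℝ) : Real.log (1 + Real.exp (-t)) ≤ Real.exp (-t) := by
  have := Real.log_le_sub_one_of_pos (x := 1 + Real.exp (-t)) (by positivity)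
  linarith

private lemma half_le_log_one_add {a : ℝ} (h0 : 0 < a) (h1 : a ≤ 1) :
    a / 2 ≤ Real.log (1 + a) := by
  have h2 : (1 : ℝ) - a / 2 ≤ Real.exp (-(a / 2)) := by
    have := Real.add_one_le_exp (-(a / 2)); linarith
  have h3 : Real.exp (a / 2) ≤ 1 + a := by
    have h4 : Real.exp (a / 2) * (1 - a / 2) ≤ Real.exp (a / 2) * Real.exp (-(a / 2)) :=
      mul_le_mul_of_nonneg_left h2 (Real.exp_pos _).le
    rw [← Real.exp_add] at h4
    simp only [add_neg_cancel, Real.exp_zero] at h4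
    nlinarith [Real.exp_pos (a / 2)]
  calc a / 2 = Real.log (Real.exp (a / 2)) := (Real.log_exp _).symm
    _ ≤ Real.log (1 + a) := Real.log_le_log (Real.exp_pos _) h3

private lemma inf'_const_mul {n : ℕ} (hne : (Finset.univ : Finset (Fin n)).Nonempty)
    (f : Fin n → ℝ) {c : ℝ} (hc : 0 ≤ c) :
    Finset.univ.inf' hne (fun i => c * f i) = c * Finset.univ.inf' hne f := by
  obtain ⟨i₀, -, h₀⟩ := Finset.exists_mem_eq_inf' hne f
  apply le_antisymm
  · exact le_trans (Finset.inf'_le _ (Finset.mem_univ i₀)) (by rw [h₀])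
  · apply Finset.le_inf'
    intro j _
    exact mul_le_mul_of_nonneg_left (h₀ ▸ Finset.inf'_le f (Finset.mem_univ j)) hc

private lemma exists_dual {d n : ℕ} (x : Fin n → EuclideanSpace ℝ (Fin d)) (y : Fin n → ℝ)
    (hli : LinearIndependent ℝ x) :
    ∃ θ : EuclideanSpace ℝ (Fin d), ∀ i, ⟪θ, x i⟫ = y i := by
  let ψ : (Fin n → ℝ) →ₗ[ℝ] EuclideanSpace ℝ (Fin d) := Fintype.linearCombination ℝ x
  let φ : EuclideanSpace ℝ (Fin d) →ₗ[ℝ] (Fin n → ℝ) :=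
    LinearMap.pi (fun j => (innerSL ℝ (x j)).toLinearMap)
  let T : (Fin n → ℝ) →ₗ[ℝ] (Fin n → ℝ) := φ.comp ψ
  have hinj : Function.Injective T := by
    rw [← LinearMap.ker_eq_bot]
    rw [Submodule.eq_bot_iff]
    intro c hc
    have hc' : ∀ j, ⟪x j, ψ c⟫ = 0 := by
      intro j
      have := congrFun (LinearMap.mem_ker.mp hc) j
      simpa [T, φ] using this
    have hψ : ψ c = 0 := by
      have h0 : ⟪ψ c, ψ c⟫ = 0 := by
        have : ψ c = ∑ i, c i • x i := rfl
        rw [this, sum_inner]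
        simp only [real_inner_smul_left]
        rw [← this]
        simp [hc']
      exact inner_self_eq_zero.mp h0
    have := Fintype.linearIndependent_iff.mp hli c (by exact hψ)
    funext j; exact this j
  have hsurj : Function.Surjective T := (LinearMap.injective_iff_surjective).mp hinj
  obtain ⟨c, hc⟩ := hsurj y
  refine ⟨ψ c, fun i => ?_⟩
  have := congrFun hc i
  simp only [T, LinearMap.comp_apply, φ, LinearMap.pi_apply] at this
  rw [real_inner_comm]
  simpa using this

set_option maxHeartbeats 2000000 in
/-- For positive weights summing to one, linearly independent
data, the weighted logistic risk `F(θ) = Σᵢ qᵢ log(1+exp(−yᵢ⟨θ,xᵢ⟩))`, and the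
unique max-margin classifier `u`: for every `ε > 0` there is `R(ε) > 0` such
that for all `R ≥ R(ε)`, every minimizer `θ_R` of `F` over the closed ball of
radius `R` satisfies `‖θ_R/R − u‖ < ε`. -/
theorem stmt_11 {d n : ℕ} (hn : 0 < n)
    (x : Fin n → EuclideanSpace ℝ (Fin d))
    (y : Fin n → ℝ) (hy : ∀ i, y i = 1 ∨ y i = -1)
    (hli : LinearIndependent ℝ x)
    (q : Fin n → ℝ) (hq0 : ∀ i, 0 < q i) (hq1 : ∑ i, q i = 1)
    (u : EuclideanSpace ℝ (Fin d)) (hu : ‖u‖ = 1)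
    (humax : ∀ v : EuclideanSpace ℝ (Fin d), ‖v‖ = 1 →
      (⨅ i, y i * ⟪v, x i⟫) ≤ ⨅ i, y i * ⟪u, x i⟫) :
    ∀ ε > (0 : ℝ), ∃ Rε > (0 : ℝ), ∀ R : ℝ, Rε ≤ R →
      ∀ θR : EuclideanSpace ℝ (Fin d),
        (‖θR‖ ≤ R ∧ ∀ θ : EuclideanSpace ℝ (Fin d), ‖θ‖ ≤ R →
          (∑ i, q i * Real.log (1 + Real.exp (-(y i * ⟪θR, x i⟫))))
            ≤ ∑ i, q i * Real.log (1 + Real.exp (-(y i * ⟪θ, x i⟫)))) →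
        ‖R⁻¹ • θR - u‖ < ε := by
  haveI : Nonempty (Fin n) := ⟨⟨0, hn⟩⟩
  have hne : (Finset.univ : Finset (Fin n)).Nonempty := Finset.univ_nonempty
  set g : EuclideanSpace ℝ (Fin d) → ℝ :=
    fun v => Finset.univ.inf' hne (fun i => y i * ⟪v, x i⟫) with hgdef
  have hunit : ∀ v : EuclideanSpace ℝ (Fin d), v ≠ 0 →
      ‖(‖v‖⁻¹ • v : EuclideanSpace ℝ (Fin d))‖ = 1 := by
    intro v hv
    have h : 0 < ‖v‖ := norm_pos_iff.mpr hv
    rw [norm_smul, Real.norm_eq_abs, abs_of_pos (by positivity), inv_mul_cancel₀ h.ne']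
  have hg : ∀ v : EuclideanSpace ℝ (Fin d), (⨅ i, y i * ⟪v, x i⟫) = g v :=
    fun v => (Finset.inf'_univ_eq_ciInf _).symm
  have hgle : ∀ v i, g v ≤ y i * ⟪v, x i⟫ :=
    fun v i => Finset.inf'_le _ (Finset.mem_univ i)
  have hgge : ∀ (v) (c : ℝ), (∀ i, c ≤ y i * ⟪v, x i⟫) → c ≤ g v :=
    fun v c h => Finset.le_inf' _ _ (fun i _ => h i)
  set γ : ℝ := g u with hγdef
  have humax' : ∀ v : EuclideanSpace ℝ (Fin d), ‖v‖ = 1 → g v ≤ γ := fun v hv => by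
    have := humax v hv; rwa [hg, hg] at this
  have ghom : ∀ (c : ℝ), 0 ≤ c → ∀ v, g (c • v) = c * g v := by
    intro c hc v
    have h1 : (fun i => y i * ⟪c • v, x i⟫) = fun i => c * (y i * ⟪v, x i⟫) := by
      funext i; rw [real_inner_smul_left]; ring
    rw [hgdef]
    simp only [h1]
    exact inf'_const_mul hne _ hc
  have hgzero : g 0 = 0 := by
    rw [hgdef]
    simp only [inner_zero_left, mul_zero]
    simp
  have hub : ∀ v : EuclideanSpace ℝ (Fin d), g v ≤ ‖v‖ * γ := by
    intro v
    by_cases hv : v = 0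
    · rw [hv, hgzero]; simp
    · have hnv : 0 < ‖v‖ := norm_pos_iff.mpr hv
      have hw : ‖(‖v‖⁻¹ • v : EuclideanSpace ℝ (Fin d))‖ = 1 := hunit v hv
      have h1 : g ((‖v‖ : ℝ) • (‖v‖⁻¹ • v)) = ‖v‖ * g (‖v‖⁻¹ • v) := ghom _ hnv.le _
      rw [smul_smul, mul_inv_cancel₀ hnv.ne', one_smul] at h1
      rw [h1]
      exact mul_le_mul_of_nonneg_left (humax' _ hw) hnv.le
  -- positivity of the margin
  obtain ⟨θ₀, hθ₀⟩ := exists_dual x y hli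
  have hy1 : ∀ i, y i * y i = 1 := fun i => by rcases hy i with h | h <;> rw [h] <;> norm_num
  have hθ₀ne : θ₀ ≠ 0 := by
    intro h
    have h2 := hθ₀ ⟨0, hn⟩
    rw [h, inner_zero_left] at h2
    rcases hy ⟨0, hn⟩ with h' | h' <;> rw [h'] at h2 <;> norm_num at h2
  have hθ₀pos : 0 < ‖θ₀‖ := norm_pos_iff.mpr hθ₀ne
  have hγpos : 0 < γ := by
    have h1 : (‖θ₀‖⁻¹ : ℝ) ≤ g (‖θ₀‖⁻¹ • θ₀) := by
      apply hgge
      intro i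
      rw [real_inner_smul_left, hθ₀ i]
      rw [show y i * (‖θ₀‖⁻¹ * y i) = ‖θ₀‖⁻¹ * (y i * y i) by ring, hy1 i, mul_one]
    have h2 := humax' _ (hunit θ₀ hθ₀ne)
    have : 0 < (‖θ₀‖⁻¹ : ℝ) := by positivity
    linarith
  intro ε hε
  -- compactness: find δ
  obtain ⟨δ, hδpos, hδ⟩ : ∃ δ > (0:ℝ), ∀ v : EuclideanSpace ℝ (Fin d),
      ‖v‖ ≤ 1 → γ - δ ≤ g v → ‖v - u‖ < ε := by
    by_cases hK : ∃ v : EuclideanSpace ℝ (Fin d), ‖v‖ ≤ 1 ∧ ε ≤ ‖v - u‖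
    · set K : Set (EuclideanSpace ℝ (Fin d)) := {v | ‖v‖ ≤ 1 ∧ ε ≤ ‖v - u‖} with hKdef
      have hKc : IsCompact K := by
        have hKeq : K = Metric.closedBall 0 1 ∩ {v | ε ≤ ‖v - u‖} := by
          ext v
          simp [hKdef, Metric.mem_closedBall, dist_zero_right, Set.mem_inter_iff]
        rw [hKeq]
        exact (isCompact_closedBall 0 1).inter_right
          (isClosed_le continuous_const (continuous_id.sub continuous_const).norm)
      have hgc : Continuous g := by
        apply Continuous.finset_inf'_apply hne
        intro i _
        have : Continuous fun v : EuclideanSpace ℝ (Fin d) => (⟪v, x i⟫ : ℝ) :=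
          continuous_id.inner continuous_const
        exact continuous_const.mul this
      obtain ⟨v₀, hv₀K, hv₀max⟩ := hKc.exists_isMaxOn
        ⟨hK.choose, hK.choose_spec⟩ hgc.continuousOn
      have hv₀n : ‖v₀‖ ≤ 1 := hv₀K.1
      have hlt : g v₀ < γ := by
        rcases lt_or_eq_of_le (le_trans (hub v₀)
          (by nlinarith : ‖v₀‖ * γ ≤ γ)) with h | h
        · exact h
        · exfalso
          have hvnorm1 : ‖v₀‖ = 1 := by
            by_contra hcon
            have : ‖v₀‖ < 1 := lt_of_le_of_ne hv₀n hcon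
            have := hub v₀
            nlinarith
          have hvne : v₀ ≠ u := by
            intro hcon
            have := hv₀K.2
            rw [hcon, sub_self, norm_zero] at this
            linarith
          have hiuv : ⟪u, v₀⟫ < 1 := by
            rcases lt_or_eq_of_le (real_inner_le_norm u v₀) with h' | h'
            · rw [hu, hvnorm1, mul_one] at h'; exact h'
            · exfalso
              rw [hu, hvnorm1, mul_one] at h'
              exact hvne ((inner_eq_one_iff_of_norm_eq_one hu hvnorm1).mp h').symm
          set w : EuclideanSpace ℝ (Fin d) := (2:ℝ)⁻¹ • (u + v₀) with hwdef
          have hgw : γ ≤ g w := by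
            apply hgge
            intro i
            rw [hwdef, real_inner_smul_left, inner_add_left]
            have h1 := hgle u i
            have h2 := hgle v₀ i
            rw [h] at h2
            nlinarith
          have hwlt : ‖w‖ < 1 := by
            have hsq : ‖u + v₀‖ ^ 2 < 4 := by
              rw [← real_inner_self_eq_norm_sq]
              rw [real_inner_add_add_self]
              rw [real_inner_self_eq_norm_sq, real_inner_self_eq_norm_sq, hu, hvnorm1]
              nlinarith
            have hlt2 : ‖u + v₀‖ < 2 := by nlinarith [norm_nonneg (u + v₀)]
            rw [hwdef, norm_smul]
            simp only [norm_inv, Real.norm_ofNat]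
            linarith
          have hwne : w ≠ 0 := by
            intro hcon
            rw [hcon, hgzero] at hgw
            linarith
          have hwpos : 0 < ‖w‖ := norm_pos_iff.mpr hwne
          have h3 := humax' _ (hunit w hwne)
          have h4 : g (‖w‖⁻¹ • w) = ‖w‖⁻¹ * g w := ghom _ (by positivity) _
          rw [h4] at h3
          have h5 : γ < ‖w‖⁻¹ * γ := by
            rw [lt_mul_iff_one_lt_left hγpos]
            exact (one_lt_inv₀ hwpos).mpr hwlt
          have h6 : ‖w‖⁻¹ * γ ≤ ‖w‖⁻¹ * g w :=
            mul_le_mul_of_nonneg_left hgw (by positivity)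
          linarith
      refine ⟨(γ - g v₀) / 2, by linarith, ?_⟩
      intro v hv1 hv2
      by_contra hcon
      push_neg at hcon
      have hvK : v ∈ K := ⟨hv1, hcon⟩
      have := hv₀max hvK
      simp only [Set.mem_setOf_eq] at this
      linarith [this]
    · push_neg at hK
      exact ⟨γ, hγpos, fun v hv _ => hK v hv⟩
  -- constants
  obtain ⟨iq, hiq⟩ := Finite.exists_min q
  set qm : ℝ := q iq with hqmdef
  have hqmpos : 0 < qm := hq0 iq
  have hqm1 : qm ≤ 1 := by
    rw [← hq1]
    exact Finset.single_le_sum (fun i _ => (hq0 i).le) (Finset.mem_univ iq)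
  set c : ℝ := Real.log (2 / qm) with hcdef
  have hec : Real.exp c = 2 / qm := Real.exp_log (by positivity)
  have hcpos : 0 < c := Real.log_pos (by rw [lt_div_iff₀ hqmpos]; linarith)
  refine ⟨max ((c + 1) / γ) (c / δ), lt_of_lt_of_le (by positivity) (le_max_left _ _), ?_⟩
  intro R hR θR hθR
  obtain ⟨hθRnorm, hmin⟩ := hθR
  have hRγ' : (c + 1) / γ ≤ R := le_trans (le_max_left _ _) hR
  have hRδ' : c / δ ≤ R := le_trans (le_max_right _ _) hR
  have hRpos : 0 < R := lt_of_lt_of_le (by positivity) hRγ'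
  have hRγ : c + 1 ≤ R * γ := by
    rw [div_le_iff₀ hγpos] at hRγ'; linarith
  have hRδ : c ≤ R * δ := by
    rw [div_le_iff₀ hδpos] at hRδ'; linarith
  -- upper bound F(R•u) ≤ exp(-(R*γ))
  have hFRu : (∑ i, q i * Real.log (1 + Real.exp (-(y i * ⟪(R • u : EuclideanSpace ℝ (Fin d)), x i⟫))))
      ≤ Real.exp (-(R * γ)) := by
    have h1 : ∀ i, q i * Real.log (1 + Real.exp (-(y i * ⟪(R • u : EuclideanSpace ℝ (Fin d)), x i⟫)))
        ≤ q i * Real.log (1 + Real.exp (-(R * γ))) := by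
      intro i
      apply mul_le_mul_of_nonneg_left _ (hq0 i).le
      apply ell_mono
      rw [real_inner_smul_left]
      have := hgle u i
      nlinarith
    calc (∑ i, q i * Real.log (1 + Real.exp (-(y i * ⟪(R • u : EuclideanSpace ℝ (Fin d)), x i⟫))))
        ≤ ∑ i, q i * Real.log (1 + Real.exp (-(R * γ))) := Finset.sum_le_sum (fun i _ => h1 i)
      _ = Real.log (1 + Real.exp (-(R * γ))) := by rw [← Finset.sum_mul, hq1, one_mul]
      _ ≤ Real.exp (-(R * γ)) := ell_le _
  have hRu_norm : ‖(R • u : EuclideanSpace ℝ (Fin d))‖ ≤ R := by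
    rw [norm_smul, hu, mul_one, Real.norm_eq_abs, abs_of_pos hRpos]
  have hFmin := le_trans (hmin (R • u) hRu_norm) hFRu
  -- lower bound
  obtain ⟨i₀, -, hi₀⟩ := Finset.exists_mem_eq_inf' hne (fun i => y i * ⟪θR, x i⟫)
  have hsi₀ : g θR = y i₀ * ⟪θR, x i₀⟫ := hi₀
  have hlower : qm * Real.log (1 + Real.exp (-(g θR))) ≤ Real.exp (-(R * γ)) := by
    have h2 : qm * Real.log (1 + Real.exp (-(g θR)))
        ≤ q i₀ * Real.log (1 + Real.exp (-(y i₀ * ⟪θR, x i₀⟫))) := by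
      rw [← hsi₀]
      exact mul_le_mul_of_nonneg_right (hiq i₀) (ell_nonneg _)
    have h3 : q i₀ * Real.log (1 + Real.exp (-(y i₀ * ⟪θR, x i₀⟫)))
        ≤ ∑ i, q i * Real.log (1 + Real.exp (-(y i * ⟪θR, x i⟫))) :=
      Finset.single_le_sum
        (f := fun i => q i * Real.log (1 + Real.exp (-(y i * ⟪θR, x i⟫))))
        (fun i _ => mul_nonneg (hq0 i).le (ell_nonneg _)) (Finset.mem_univ i₀)
    linarith
  have hsnn : 0 ≤ g θR := by
    by_contra hcon
    push_neg at hcon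
    have h1 : Real.log 2 ≤ Real.log (1 + Real.exp (-(g θR))) := by
      apply Real.log_le_log two_pos
      have : (1:ℝ) < Real.exp (-(g θR)) := Real.one_lt_exp_iff.mpr (by linarith)
      linarith
    have hlog2 : (0.6931471803 : ℝ) < Real.log 2 := Real.log_two_gt_d9
    have h2 : qm * Real.log 2 ≤ Real.exp (-(R * γ)) :=
      le_trans (mul_le_mul_of_nonneg_left h1 hqmpos.le) hlower
    have h3 : Real.exp (-(R * γ)) ≤ Real.exp (-(c + 1)) := Real.exp_le_exp.mpr (by linarith)
    have h4 : Real.exp (-(c + 1)) = qm / 2 * Real.exp (-1) := by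
      rw [Real.exp_neg, Real.exp_add, hec, Real.exp_neg]
      field_simp
    have he1 : Real.exp (-1 : ℝ) < 1 := Real.exp_lt_one_iff.mpr (by norm_num)
    nlinarith [Real.exp_pos (-1 : ℝ)]
  have hes1 : Real.exp (-(g θR)) ≤ 1 := Real.exp_le_one_iff.mpr (by linarith)
  have h5 : qm * (Real.exp (-(g θR)) / 2) ≤ Real.exp (-(R * γ)) :=
    le_trans (mul_le_mul_of_nonneg_left
      (half_le_log_one_add (Real.exp_pos _) hes1) hqmpos.le) hlower
  have h6 : Real.exp (-(g θR)) ≤ (2 / qm) * Real.exp (-(R * γ)) := by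
    rw [div_mul_eq_mul_div, le_div_iff₀ hqmpos]
    nlinarith
  have h7 : Real.exp (-(g θR)) ≤ Real.exp (c - R * γ) := by
    rw [show c - R * γ = c + -(R * γ) by ring, Real.exp_add, hec]
    exact h6
  have h8 : R * γ - c ≤ g θR := by
    have := Real.exp_le_exp.mp h7
    linarith
  have hvnorm : ‖(R⁻¹ • θR : EuclideanSpace ℝ (Fin d))‖ ≤ 1 := by
    rw [norm_smul, Real.norm_eq_abs, abs_of_pos (inv_pos.mpr hRpos)]
    calc R⁻¹ * ‖θR‖ ≤ R⁻¹ * R :=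
          mul_le_mul_of_nonneg_left hθRnorm (by positivity)
      _ = 1 := inv_mul_cancel₀ hRpos.ne'
  apply hδ _ hvnorm
  rw [ghom R⁻¹ (by positivity) θR]
  have h9 : R * (γ - δ) ≤ g θR := by nlinarith
  calc γ - δ = R⁻¹ * (R * (γ - δ)) := by field_simp
    _ ≤ R⁻¹ * g θR := mul_le_mul_of_nonneg_left h9 (by positivity)
end
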